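/- arXiv:2003.07359 — 5 statements merged into one kernel-verified Lean document; each statement's English description precedes it below -/
import Mathlib

section
/- For |q|<1, the Lambert-type series $\sum_{n=1}^{\infty} \frac{q^n}{1+q^{2n}}$ equals the double series $\sum_{n=1}^{\infty} \sum_{j=-n+1}^{n} q^{n^2+j^2}$. -/
open Finset

/-- the character mod 4 -/
def chi (n : ℕ) : ℤ := if n % 4 = 1 then 1 else if n % 4 = 3 then -1 else 0

lemma chi_mul (m n : ℕ) : chi (m * n) = chi m * chi n := by
  unfold chi
  have h : (m * n) % 4 = (m % 4) * (n % 4) % 4 := Nat.mul_mod m n 4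
  have hm := Nat.mod_lt m (show 0 < 4 by norm_num)
  have hn := Nat.mod_lt n (show 0 < 4 by norm_num)
  interval_cases hm' : m % 4 <;> interval_cases hn' : n % 4 <;> simp_all <;> omega

lemma chi_pow (p k : ℕ) : chi (p ^ k) = (chi p) ^ k := by
  induction k with
  | zero => simp [chi]
  | succ k ih => rw [pow_succ, chi_mul, ih, pow_succ]

/-- chi as an arithmetic function -/
def chiA : ArithmeticFunction ℤ := ⟨chi, by simp [chi]⟩

lemma chiA_mult : chiA.IsMultiplicative := by
  refine ⟨by simp [chiA, chi], fun _ => ?_⟩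
  exact chi_mul _ _

/-- a n = ∑_{d|n} chi d -/
noncomputable def aF : ArithmeticFunction ℤ := chiA * ArithmeticFunction.zeta

lemma aF_apply (n : ℕ) : aF n = ∑ d ∈ n.divisors, chi d := by
  have := ArithmeticFunction.coe_mul_zeta_apply (f := chiA) (x := n)
  simpa [aF, chiA] using this

lemma aF_mult : aF.IsMultiplicative :=
  chiA_mult.mul (ArithmeticFunction.isMultiplicative_zeta.natCast)

lemma aF_prime_pow {p : ℕ} (hp : p.Prime) (k : ℕ) :
    aF (p ^ k) = ∑ i ∈ range (k + 1), (chi p) ^ i := by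
  rw [aF_apply, Nat.sum_divisors_prime_pow hp]
  exact Finset.sum_congr rfl fun i _ => chi_pow p i

lemma aF_one : aF 1 = 1 := aF_mult.1

lemma aF_two_pow (k : ℕ) : aF (2 ^ k) = 1 := by
  rw [aF_prime_pow Nat.prime_two]
  have : chi 2 = 0 := by simp [chi]
  rw [this]
  rw [Finset.sum_range_succ']
  simp

lemma aF_prime_pow_one {p : ℕ} (hp : p.Prime) (hp1 : p % 4 = 1) (k : ℕ) :
    aF (p ^ k) = k + 1 := by
  rw [aF_prime_pow hp]
  have : chi p = 1 := by simp [chi, hp1]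
  simp [this]

lemma aF_prime_pow_three {p : ℕ} (hp : p.Prime) (hp3 : p % 4 = 3) (k : ℕ) :
    aF (p ^ k) = if k % 2 = 0 then 1 else 0 := by
  rw [aF_prime_pow hp]
  have hc : chi p = -1 := by simp [chi, hp3]
  rw [hc]
  induction k with
  | zero => simp
  | succ k ih =>
    rw [Finset.sum_range_succ, ih]
    rcases Nat.even_or_odd k with hk | hk
    · rw [if_pos (Nat.even_iff.mp hk), (hk.add_one).neg_one_pow]
      simp [Nat.succ_mod_two_eq_one_iff.mpr (Nat.even_iff.mp hk)]
    · rw [if_neg (by simp [Nat.odd_iff.mp hk]), (hk.add_one).neg_one_pow]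
      simp [Nat.succ_mod_two_eq_zero_iff.mpr (Nat.odd_iff.mp hk)]
open Finset GaussianInt Zsqrtd

local notation "ℤI" => GaussianInt

/-- The fundamental sector for the unit action on ℤ[i]. -/
def InSector (z : ℤI) : Prop := 1 ≤ z.re ∧ -z.re < z.im ∧ z.im ≤ z.re

instance : DecidablePred InSector := fun z => by unfold InSector; infer_instance

lemma norm_eq' (z : ℤI) : z.norm = z.re * z.re + z.im * z.im := by
  rw [Zsqrtd.norm_def]; ring

lemma mul_I (z : ℤI) : z * ⟨0, 1⟩ = ⟨-z.im, z.re⟩ := by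
  rw [Zsqrtd.ext_iff, Zsqrtd.re_mul, Zsqrtd.im_mul]; constructor <;> ring

lemma mul_negI (z : ℤI) : z * ⟨0, -1⟩ = ⟨z.im, -z.re⟩ := by
  rw [Zsqrtd.ext_iff, Zsqrtd.re_mul, Zsqrtd.im_mul]; constructor <;> ring

lemma isUnit_I : IsUnit (⟨0, 1⟩ : ℤI) :=
  (Zsqrtd.norm_eq_one_iff' (by norm_num) _).mp (by rw [norm_eq']; ring)

lemma isUnit_negI : IsUnit (⟨0, -1⟩ : ℤI) :=
  (Zsqrtd.norm_eq_one_iff' (by norm_num) _).mp (by rw [norm_eq']; ring)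

lemma isUnit_iff' {u : ℤI} :
    IsUnit u ↔ u = 1 ∨ u = -1 ∨ u = ⟨0, 1⟩ ∨ u = ⟨0, -1⟩ := by
  constructor
  · intro h
    have h1 : u.norm = 1 := (Zsqrtd.norm_eq_one_iff' (by norm_num) u).mpr h
    rw [norm_eq'] at h1
    have hre : -1 ≤ u.re ∧ u.re ≤ 1 := by
      constructor <;> nlinarith [mul_self_nonneg u.re, mul_self_nonneg u.im]
    have him : -1 ≤ u.im ∧ u.im ≤ 1 := by
      constructor <;> nlinarith [mul_self_nonneg u.re, mul_self_nonneg u.im]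
    obtain ⟨a, b⟩ := u
    simp only [Zsqrtd.ext_iff] at *
    obtain ⟨h2, h3⟩ := hre; obtain ⟨h4, h5⟩ := him
    have : (1 : ℤI).re = 1 ∧ (1 : ℤI).im = 0 := by constructor <;> rfl
    have : (-1 : ℤI).re = -1 ∧ (-1 : ℤI).im = 0 := by constructor <;> rfl
    interval_cases a <;> interval_cases b <;> simp_all
  · rintro (rfl | rfl | rfl | rfl)
    · exact isUnit_one
    · exact isUnit_one.neg
    · exact isUnit_I
    · exact isUnit_negI

lemma sector_unique {z w : ℤI} (hz : InSector z) (hw : InSector w)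
    (h : Associated z w) : z = w := by
  obtain ⟨u, hu⟩ := h
  obtain ⟨hz1, hz2, hz3⟩ := hz
  obtain ⟨hw1, hw2, hw3⟩ := hw
  rcases isUnit_iff'.mp u.isUnit with h1 | h1 | h1 | h1 <;> rw [h1] at hu
  · rw [mul_one] at hu; exact hu
  · rw [mul_neg_one] at hu
    simp only [← hu, Zsqrtd.re_neg, Zsqrtd.im_neg] at hw1 hw2 hw3
    omega
  · rw [mul_I] at hu
    rw [← hu] at hw1 hw2 hw3
    simp only at hw1 hw2 hw3
    omega
  · rw [mul_negI] at hu
    rw [← hu] at hw1 hw2 hw3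
    simp only at hw1 hw2 hw3
    omega

lemma sector_exists {z : ℤI} (hz : z ≠ 0) :
    InSector z ∨ InSector (z * ⟨0, 1⟩) ∨ InSector (-z) ∨ InSector (z * ⟨0, -1⟩) := by
  rw [mul_I, mul_negI]
  obtain ⟨x, y⟩ := z
  have hxy : ¬(x = 0 ∧ y = 0) := by
    intro ⟨h1, h2⟩
    apply hz
    rw [Zsqrtd.ext_iff]
    exact ⟨h1, h2⟩
  simp only [InSector, Zsqrtd.re_neg, Zsqrtd.im_neg]
  omega

/-- the sector representative of `z` -/
def sect (z : ℤI) : ℤI :=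
  if InSector z then z
  else if InSector (z * ⟨0, 1⟩) then z * ⟨0, 1⟩
  else if InSector (-z) then -z
  else z * ⟨0, -1⟩

lemma sect_assoc (z : ℤI) : Associated z (sect z) := by
  unfold sect
  split_ifs
  · rfl
  · exact ⟨isUnit_I.unit, by rw [IsUnit.unit_spec]⟩
  · exact ⟨(isUnit_one.neg).unit, by rw [IsUnit.unit_spec, mul_neg_one]⟩
  · exact ⟨isUnit_negI.unit, by rw [IsUnit.unit_spec]⟩

lemma sect_inSector {z : ℤI} (hz : z ≠ 0) : InSector (sect z) := by
  rcases sector_exists hz with h | h | h | h <;> unfold sect <;> split_ifs <;>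
    first | assumption | tauto

lemma sect_eq_of_inSector {z : ℤI} (h : InSector z) : sect z = z := if_pos h

lemma sect_congr {z w : ℤI} (hz : z ≠ 0) (h : Associated z w) : sect z = sect w := by
  have hw : w ≠ 0 := by
    rintro rfl; exact hz ((associated_zero_iff_eq_zero z).mp h)
  exact sector_unique (sect_inSector hz) (sect_inSector hw)
    (((sect_assoc z).symm.trans h).trans (sect_assoc w))

lemma norm_of_associated {z w : ℤI} (h : Associated z w) : z.norm = w.norm := by
  obtain ⟨u, hu⟩ := h
  have : u.val.norm = 1 := (Zsqrtd.norm_eq_one_iff' (by norm_num) _).mpr u.isUnit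
  rw [← hu, Zsqrtd.norm_mul, this, mul_one]

lemma norm_sect (z : ℤI) : (sect z).norm = z.norm := (norm_of_associated (sect_assoc z)).symm

lemma sect_ne_zero {z : ℤI} (hz : z ≠ 0) : sect z ≠ 0 := by
  intro h
  exact hz ((associated_zero_iff_eq_zero z).mp (h ▸ sect_assoc z))

section P3
open Finset GaussianInt Zsqrtd

/-- sector elements of given norm -/
def Sect (N : ℕ) : Type := {z : ℤI // z.norm = (N : ℤ) ∧ InSector z}

noncomputable def bF (N : ℕ) : ℕ := Nat.card (Sect N)

lemma normZ : (0 : ℤI).norm = 0 := by simp [Zsqrtd.norm_def]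

lemma ne_zero_of_norm_pos {z : ℤI} {N : ℕ} (hN : 0 < N) (h : z.norm = (N : ℤ)) :
    z ≠ 0 := by
  intro h0
  rw [h0, normZ] at h
  exact hN.ne' (by exact_mod_cast h.symm)

lemma star_dvd_star' {a b : ℤI} (h : a ∣ b) : star a ∣ star b := by
  obtain ⟨c, rfl⟩ := h
  exact ⟨star c, by rw [star_mul, mul_comm]⟩

set_option synthInstance.maxHeartbeats 1000000 in
lemma prime_of_norm_prime {z : ℤI} (hz : Nat.Prime z.norm.natAbs) : Prime z := by
  rw [← irreducible_iff_prime]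
  constructor
  · intro hu
    rw [← Zsqrtd.norm_eq_one_iff] at hu
    exact hz.ne_one hu
  · intro a b hab
    have hnn := congrArg (fun t : ℤI => t.norm.natAbs) hab
    simp only [Zsqrtd.norm_mul, Int.natAbs_mul] at hnn
    have hd : a.norm.natAbs ∣ z.norm.natAbs := Dvd.intro _ hnn.symm
    rcases (Nat.Prime.eq_one_or_self_of_dvd hz _ hd) with h1 | h1
    · exact Or.inl (Zsqrtd.norm_eq_one_iff.mp h1)
    · right
      apply Zsqrtd.norm_eq_one_iff.mp
      have hz0 : z.norm.natAbs ≠ 0 := hz.ne_zero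
      have : z.norm.natAbs * 1 = z.norm.natAbs * b.norm.natAbs := by
        rw [mul_one]
        nth_rewrite 1 [hnn, h1]
        rfl
      exact (Nat.eq_of_mul_eq_mul_left (Nat.pos_of_ne_zero hz0) this).symm

lemma norm_pow' (z : ℤI) (n : ℕ) : (z ^ n).norm = z.norm ^ n := by
  induction n with
  | zero => simp [Zsqrtd.norm_def]
  | succ n ih => rw [pow_succ, Zsqrtd.norm_mul, ih, pow_succ]

lemma nat_pow_cancel_aux {p a b x y : ℕ} (hp : p.Prime) (hab : a ≤ b)
    (h : p ^ a * x = p ^ b * y) (hx : ¬p ∣ x) : a = b ∧ x = y := by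
  have hb : p ^ b = p ^ a * p ^ (b - a) := by
    rw [← pow_add, Nat.add_sub_cancel' hab]
  rw [hb, mul_assoc] at h
  have hx' : x = p ^ (b - a) * y := Nat.eq_of_mul_eq_mul_left (pow_pos hp.pos a) h
  rcases Nat.eq_zero_or_pos (b - a) with h0 | h0
  · constructor
    · omega
    · rw [hx', h0, pow_zero, one_mul]
  · exfalso
    apply hx
    rw [hx', ← Nat.sub_add_cancel h0, pow_add, pow_one]
    exact ⟨p ^ (b - a - 1) * y, by ring⟩

lemma nat_pow_cancel {p a b x y : ℕ} (hp : p.Prime) (h : p ^ a * x = p ^ b * y)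
    (hx : ¬p ∣ x) (hy : ¬p ∣ y) : a = b ∧ x = y := by
  rcases le_total a b with hab | hab
  · exact nat_pow_cancel_aux hp hab h hx
  · obtain ⟨h1, h2⟩ := nat_pow_cancel_aux hp hab h.symm hy
    exact ⟨h1.symm, h2.symm⟩

lemma card_sect_one : Nat.card (Sect 1) = 1 := by
  rw [Nat.card_eq_one_iff_unique]
  constructor
  · constructor
    rintro ⟨z, hz, hz1, hz2, hz3⟩ ⟨w, hw, hw1, hw2, hw3⟩
    have hz' : z = 1 := by
      rw [norm_eq'] at hz
      push_cast at hz
      have h1 : z.re = 1 := by nlinarith [mul_self_nonneg z.im]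
      have h2 : z.im = 0 := by nlinarith
      rw [Zsqrtd.ext_iff, h1, h2]
      exact ⟨rfl, rfl⟩
    have hw' : w = 1 := by
      rw [norm_eq'] at hw
      push_cast at hw
      have h1 : w.re = 1 := by nlinarith [mul_self_nonneg w.im]
      have h2 : w.im = 0 := by nlinarith
      rw [Zsqrtd.ext_iff, h1, h2]
      exact ⟨rfl, rfl⟩
    subst hz' hw'; rfl
  · exact ⟨⟨1, by simp [norm_eq'], by refine ⟨le_refl 1, ?_, ?_⟩ <;> simp [Zsqrtd.re_one, Zsqrtd.im_one]⟩⟩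

lemma card_strip {N c : ℕ} (hN : 0 < N) (hc : 0 < c) (π₀ : ℤI)
    (hπn : π₀.norm = (c : ℤ)) (hcN : c ∣ N)
    (hdvd : ∀ z : ℤI, z.norm = (N : ℤ) → π₀ ∣ z) :
    Nat.card (Sect N) = Nat.card (Sect (N / c)) := by
  have hπ0 : π₀ ≠ 0 := by
    intro h; rw [h, normZ] at hπn; exact hc.ne' (by exact_mod_cast hπn.symm)
  have hNc : 0 < N / c := Nat.div_pos (Nat.le_of_dvd hN hcN) hc
  have hcast : ((N / c : ℕ) : ℤ) * (c : ℤ) = (N : ℤ) := by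
    exact_mod_cast congrArg (Nat.cast : ℕ → ℤ) (Nat.div_mul_cancel hcN)
  have hcz : (c : ℤ) ≠ 0 := by exact_mod_cast hc.ne'
  have keyF : ∀ z : ℤI, z.norm = (N : ℤ) → InSector z →
      (sect (z / π₀)).norm = ((N / c : ℕ) : ℤ) ∧ InSector (sect (z / π₀)) := by
    intro z hz _
    have hz0 : z ≠ 0 := ne_zero_of_norm_pos hN hz
    have key : π₀ * (z / π₀) = z := EuclideanDomain.mul_div_cancel' hπ0 (hdvd z hz)
    have hq0 : z / π₀ ≠ 0 := by
      intro h; rw [h, mul_zero] at key; exact hz0 key.symm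
    have hqn : (z / π₀).norm = ((N / c : ℕ) : ℤ) := by
      have h2 := congrArg Zsqrtd.norm key
      rw [Zsqrtd.norm_mul, hπn, hz] at h2
      apply mul_left_cancel₀ hcz
      rw [h2, ← hcast]; ring
    exact ⟨by rw [norm_sect]; exact hqn, sect_inSector hq0⟩
  have keyB : ∀ w : ℤI, w.norm = ((N / c : ℕ) : ℤ) → InSector w →
      (sect (π₀ * w)).norm = (N : ℤ) ∧ InSector (sect (π₀ * w)) := by
    intro w hw _
    have hw0 : w ≠ 0 := ne_zero_of_norm_pos hNc hw
    have hmul0 : π₀ * w ≠ 0 := mul_ne_zero hπ0 hw0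
    constructor
    · rw [norm_sect, Zsqrtd.norm_mul, hπn, hw, mul_comm, hcast]
    · exact sect_inSector hmul0
  refine Nat.card_congr ⟨fun z => ⟨sect (z.val / π₀), keyF z.val z.prop.1 z.prop.2⟩,
    fun w => ⟨sect (π₀ * w.val), keyB w.val w.prop.1 w.prop.2⟩, ?_, ?_⟩
  · rintro ⟨z, hz, hzs⟩
    apply Subtype.ext
    show sect (π₀ * sect (z / π₀)) = z
    have hz0 : z ≠ 0 := ne_zero_of_norm_pos hN hz
    have key : π₀ * (z / π₀) = z := EuclideanDomain.mul_div_cancel' hπ0 (hdvd z hz)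
    have hq0 : z / π₀ ≠ 0 := by
      intro h; rw [h, mul_zero] at key; exact hz0 key.symm
    have h1 : Associated (π₀ * (z / π₀)) (π₀ * sect (z / π₀)) :=
      (sect_assoc (z / π₀)).mul_left π₀
    rw [key] at h1
    rw [← sect_congr hz0 h1, sect_eq_of_inSector hzs]
  · rintro ⟨w, hw, hws⟩
    apply Subtype.ext
    show sect (sect (π₀ * w) / π₀) = w
    have hw0 : w ≠ 0 := ne_zero_of_norm_pos hNc hw
    have hmul0 : π₀ * w ≠ 0 := mul_ne_zero hπ0 hw0
    set s := sect (π₀ * w) with hs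
    have hassoc : Associated (π₀ * w) s := sect_assoc _
    have hdvds : π₀ ∣ s := dvd_trans (dvd_mul_right π₀ w) hassoc.dvd
    have hs0 : s ≠ 0 := sect_ne_zero hmul0
    have key2 : π₀ * (s / π₀) = s := EuclideanDomain.mul_div_cancel' hπ0 hdvds
    have h3 : Associated (π₀ * w) (π₀ * (s / π₀)) := by rw [key2]; exact hassoc
    have h4 : Associated w (s / π₀) := Associated.of_mul_left h3 (Associated.refl π₀) hπ0
    rw [← sect_congr hw0 h4, sect_eq_of_inSector hws]
end P3
section P4
open Finset GaussianInt Zsqrtd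

lemma card_split {p e M : ℕ} (hp : p.Prime) (hM : 0 < M) (hpM : ¬p ∣ M)
    (π : GaussianInt) (hπn : π.norm = (p : ℤ))
    (hna : ¬Associated π (star π)) :
    Nat.card (Sect (p ^ e * M)) = (e + 1) * Nat.card (Sect M) := by
  have hπ : Prime π := prime_of_norm_prime (by rw [hπn]; simpa using hp)
  have hπ' : Prime (star π) := prime_of_norm_prime (by rw [Zsqrtd.norm_conj, hπn]; simpa using hp)
  have hπ0 : π ≠ 0 := hπ.ne_zero
  have hπ'0 : (star π) ≠ 0 := hπ'.ne_zero
  set N := p ^ e * M with hNdef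
  have hN : 0 < N := Nat.mul_pos (pow_pos hp.pos e) hM
  -- p as product of π and star π
  have hpig : ((p : ℤ) : GaussianInt) = π * star π := by
    rw [← hπn]; exact Zsqrtd.norm_eq_mul_conj π
  -- sector elements of norm M are not divisible by π or star π
  have hndvd : ∀ w : GaussianInt, w.norm = (M : ℤ) → ¬π ∣ w ∧ ¬(star π) ∣ w := by
    intro w hw
    constructor <;> intro ⟨t, ht⟩ <;> apply hpM
    · have : w.norm = π.norm * t.norm := by rw [ht, Zsqrtd.norm_mul]
      rw [hw, hπn] at this
      exact ⟨t.norm.natAbs, by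
        have h2 := congrArg Int.natAbs this
        rwa [Int.natAbs_natCast, Int.natAbs_mul, Int.natAbs_natCast] at h2⟩
    · have : w.norm = (star π).norm * t.norm := by rw [ht, Zsqrtd.norm_mul]
      rw [hw, Zsqrtd.norm_conj, hπn] at this
      exact ⟨t.norm.natAbs, by
        have h2 := congrArg Int.natAbs this
        rwa [Int.natAbs_natCast, Int.natAbs_mul, Int.natAbs_natCast] at h2⟩
  -- the map
  have hgnorm : ∀ (i : Fin (e + 1)) (w : Sect M),
      (sect (π ^ (i : ℕ) * star π ^ (e - (i : ℕ)) * w.val)).norm = (N : ℤ) ∧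
      InSector (sect (π ^ (i : ℕ) * star π ^ (e - (i : ℕ)) * w.val)) := by
    rintro i ⟨w, hw, hws⟩
    have hw0 : w ≠ 0 := ne_zero_of_norm_pos hM hw
    have hz0 : π ^ (i : ℕ) * star π ^ (e - (i : ℕ)) * w ≠ 0 :=
      mul_ne_zero (mul_ne_zero (pow_ne_zero _ hπ0) (pow_ne_zero _ hπ'0)) hw0
    constructor
    · rw [norm_sect]
      simp only [Zsqrtd.norm_mul, norm_pow', Zsqrtd.norm_conj, hπn, hw]
      rw [← pow_add, Nat.add_sub_cancel' (Nat.lt_succ_iff.mp i.isLt)]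
      push_cast [hNdef]
      ring
    · exact sect_inSector hz0
  set g : Fin (e + 1) × Sect M → Sect N :=
    fun iw => ⟨sect (π ^ (iw.1 : ℕ) * star π ^ (e - (iw.1 : ℕ)) * iw.2.val),
      (hgnorm iw.1 iw.2).1, (hgnorm iw.1 iw.2).2⟩ with hgdef
  -- injectivity
  have key : ∀ (i i' : Fin (e + 1)) (w w' : Sect M), (i : ℕ) ≤ (i' : ℕ) →
      g (i, w) = g (i', w') → (i : ℕ) = (i' : ℕ) ∧ w.val = w'.val := by
    rintro i i' ⟨w, hw, hws⟩ ⟨w', hw', hws'⟩ hii h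
    have hw0 : w ≠ 0 := ne_zero_of_norm_pos hM hw
    have hw'0 : w' ≠ 0 := ne_zero_of_norm_pos hM hw'
    have hseq : sect (π ^ (i : ℕ) * star π ^ (e - (i : ℕ)) * w)
        = sect (π ^ (i' : ℕ) * star π ^ (e - (i' : ℕ)) * w') := congrArg Subtype.val h
    have hA0 : π ^ (i : ℕ) * star π ^ (e - (i : ℕ)) * w ≠ 0 :=
      mul_ne_zero (mul_ne_zero (pow_ne_zero _ hπ0) (pow_ne_zero _ hπ'0)) hw0
    have hassoc : Associated (π ^ (i : ℕ) * star π ^ (e - (i : ℕ)) * w)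
        (π ^ (i' : ℕ) * star π ^ (e - (i' : ℕ)) * w') :=
      (sect_assoc _).trans (hseq ▸ (sect_assoc _).symm)
    obtain ⟨u, hu⟩ := hassoc
    -- rewrite both sides as π^i * rest
    have hi' : (i' : ℕ) = (i : ℕ) + ((i' : ℕ) - (i : ℕ)) := by omega
    rw [hi', pow_add] at hu
    have hu2 : π ^ (i : ℕ) * (star π ^ (e - (i : ℕ)) * w * u)
        = π ^ (i : ℕ) * (π ^ ((i' : ℕ) - (i : ℕ)) * star π ^ (e - ((i : ℕ) + ((i' : ℕ) - (i : ℕ)))) * w') := by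
      linear_combination hu
    have hu3 := mul_left_cancel₀ (pow_ne_zero (i : ℕ) hπ0) hu2
    have hieq : (i : ℕ) = (i' : ℕ) := by
      by_contra hne
      have hlt : 0 < (i' : ℕ) - (i : ℕ) := by omega
      have hdvd2 : π ∣ star π ^ (e - (i : ℕ)) * w * u := by
        rw [hu3]
        exact Dvd.dvd.mul_right (Dvd.dvd.mul_right
          (dvd_pow_self π hlt.ne') _) _
      rcases hπ.dvd_mul.mp hdvd2 with h2 | h2
      · rcases hπ.dvd_mul.mp h2 with h3 | h3
        · exact hna (Irreducible.associated_of_dvd hπ.irreducible hπ'.irreducible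
            (hπ.dvd_of_dvd_pow h3))
        · exact (hndvd w hw).1 h3
      · exact hπ.not_unit (isUnit_of_dvd_unit h2 u.isUnit)
    refine ⟨hieq, ?_⟩
    rw [← hieq] at hu3
    simp only [Nat.sub_self, pow_zero, one_mul, Nat.add_zero] at hu3
    have hu4 : star π ^ (e - (i : ℕ)) * (w * u) = star π ^ (e - (i : ℕ)) * w' := by
      rw [← hu3]; ring
    have hu5 := mul_left_cancel₀ (pow_ne_zero _ hπ'0) hu4
    exact sector_unique hws hws' ⟨u, hu5⟩
  have hinj : Function.Injective g := by
    rintro ⟨i, w⟩ ⟨i', w'⟩ h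
    rcases le_total (i : ℕ) (i' : ℕ) with hii | hii
    · obtain ⟨h1, h2⟩ := key i i' w w' hii h
      exact Prod.ext (Fin.ext h1) (Subtype.ext h2)
    · obtain ⟨h1, h2⟩ := key i' i w' w hii h.symm
      exact Prod.ext (Fin.ext h1.symm) (Subtype.ext h2.symm)
  have hsurj : Function.Surjective g := by
    rintro ⟨z, hz, hzs⟩
    have hz0 : z ≠ 0 := ne_zero_of_norm_pos hN hz
    have hf1 : FiniteMultiplicity π z := FiniteMultiplicity.of_prime_left hπ hz0
    obtain ⟨w₁, hw₁, hnd1⟩ := hf1.exists_eq_pow_mul_and_not_dvd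
    set i := multiplicity π z with hidef
    have hw₁0 : w₁ ≠ 0 := by
      intro h; rw [h, mul_zero] at hw₁; exact hz0 hw₁
    have hf2 : FiniteMultiplicity (star π) w₁ := FiniteMultiplicity.of_prime_left hπ' hw₁0
    obtain ⟨v, hv, hnd2⟩ := hf2.exists_eq_pow_mul_and_not_dvd
    set j := multiplicity (star π) w₁ with hjdef
    have hv0 : v ≠ 0 := by
      intro h; rw [h, mul_zero] at hv; exact hw₁0 hv
    have hndv : ¬π ∣ v := fun h => hnd1 (hv ▸ h.mul_left _)
    -- norm bookkeeping
    set nv := v.norm.natAbs with hnvdef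
    have hnv : v.norm = (nv : ℤ) := (Int.natAbs_of_nonneg (Zsqrtd.norm_nonneg (by norm_num) v)).symm
    have hnorms : p ^ (i + j) * nv = p ^ e * M := by
      have h1 : z.norm = π.norm ^ i * (star π).norm ^ j * v.norm := by
        rw [hw₁, hv]
        simp only [Zsqrtd.norm_mul, norm_pow']
        ring
      rw [hz, hπn, Zsqrtd.norm_conj, hπn, hnv] at h1
      have h2 : ((p ^ (i + j) * nv : ℕ) : ℤ) = ((p ^ e * M : ℕ) : ℤ) := by
        push_cast
        rw [pow_add]
        rw [show ((p : ℤ)) ^ e * (M : ℤ) = ((N : ℕ) : ℤ) from by rw [hNdef]; push_cast; ring]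
        rw [h1]
      exact_mod_cast h2
    have hpnv : ¬p ∣ nv := by
      intro ⟨t, ht⟩
      have hdvd3 : π ∣ ((nv : ℤ) : GaussianInt) := by
        have : ((nv : ℤ) : GaussianInt) = ((p : ℤ) : GaussianInt) * ((t : ℤ) : GaussianInt) := by
          rw [← Int.cast_mul]
          norm_cast
        rw [this, hpig]
        exact Dvd.dvd.mul_right (dvd_mul_right π (star π)) _
      rw [← hnv, Zsqrtd.norm_eq_mul_conj] at hdvd3
      rcases hπ.dvd_mul.mp hdvd3 with h3 | h3
      · exact hndv h3
      · have h4 : star π ∣ star (star v) := star_dvd_star' h3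
        rw [star_star] at h4
        exact hnd2 h4
    obtain ⟨hije, hnvM⟩ := nat_pow_cancel hp hnorms hpnv hpM
    have hie : i ≤ e := by omega
    have hvsect : (sect v).norm = (M : ℤ) ∧ InSector (sect v) :=
      ⟨by rw [norm_sect, hnv, hnvM], sect_inSector hv0⟩
    refine ⟨⟨⟨i, by omega⟩, ⟨sect v, hvsect.1, hvsect.2⟩⟩, ?_⟩
    apply Subtype.ext
    show sect (π ^ i * star π ^ (e - i) * sect v) = z
    have hassoc2 : Associated (π ^ i * star π ^ (e - i) * v)
        (π ^ i * star π ^ (e - i) * sect v) := (sect_assoc v).mul_left _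
    have hzeq : π ^ i * star π ^ (e - i) * v = z := by
      rw [hw₁, hv, ← hije]
      simp only [Nat.add_sub_cancel_left]
      ring
    rw [hzeq] at hassoc2
    rw [← sect_congr hz0 hassoc2, sect_eq_of_inSector hzs]
  rw [Nat.card_congr (Equiv.ofBijective g ⟨hinj, hsurj⟩).symm, Nat.card_prod]
  congr 1
  simp [Nat.card_eq_fintype_card]
end P4
section P5
open Finset GaussianInt Zsqrtd

lemma star_natCast'' (n : ℕ) : star ((n : GaussianInt)) = (n : GaussianInt) := by
  rw [Zsqrtd.ext_iff, Zsqrtd.re_star, Zsqrtd.im_star, Zsqrtd.im_natCast, neg_zero]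
  exact ⟨rfl, rfl⟩

lemma natCast_dvd_natCast' {a b : ℕ} (h : a ∣ b) : (a : GaussianInt) ∣ (b : GaussianInt) := by
  obtain ⟨k, rfl⟩ := h
  exact ⟨(k : GaussianInt), by push_cast; ring⟩

lemma not_sq_prime {p : ℕ} (hp : p.Prime) (a : ℕ) : a * a ≠ p := by
  intro h
  rcases hp.eq_one_or_self_of_dvd a ⟨a, h.symm⟩ with h1 | h1
  · rw [h1] at h; exact hp.one_lt.ne' (by omega)
  · rw [h1] at h
    have := Nat.eq_of_mul_eq_mul_left hp.pos (by rw [h, mul_one] : p * p = p * 1)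
    exact hp.one_lt.ne' this

/-- key: for a prime `p ≡ 1 [MOD 4]` there is a Gaussian prime of norm `p`
not associated to its conjugate -/
lemma exists_gauss_prime {p : ℕ} (hp : p.Prime) (hp1 : p % 4 = 1) :
    ∃ π : GaussianInt, π.norm = (p : ℤ) ∧ ¬Associated π (star π) := by
  haveI : Fact p.Prime := ⟨hp⟩
  obtain ⟨a, b, hab⟩ := Nat.Prime.sq_add_sq (p := p) (by omega)
  refine ⟨⟨(a : ℤ), (b : ℤ)⟩, ?_, ?_⟩
  · rw [norm_eq']
    push_cast
    rw [← hab]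
    push_cast
    ring
  · intro ⟨u, hu⟩
    have hstar : star (⟨(a : ℤ), (b : ℤ)⟩ : GaussianInt) = ⟨(a : ℤ), -(b : ℤ)⟩ := by
      rw [Zsqrtd.ext_iff, Zsqrtd.re_star, Zsqrtd.im_star]
      exact ⟨rfl, rfl⟩
    have hneg : -(⟨(a : ℤ), (b : ℤ)⟩ : GaussianInt) = ⟨-(a : ℤ), -(b : ℤ)⟩ := rfl
    rcases isUnit_iff'.mp u.isUnit with h1 | h1 | h1 | h1 <;> rw [h1] at hu <;>
        rw [hstar] at hu
    · rw [mul_one] at hu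
      simp only [Zsqrtd.mk.injEq] at hu
      obtain ⟨h2, h3⟩ := hu
      have hb : b = 0 := by omega
      rw [hb] at hab
      exact not_sq_prime hp a (by nlinarith)
    · rw [mul_neg_one, hneg] at hu
      simp only [Zsqrtd.mk.injEq] at hu
      obtain ⟨h2, h3⟩ := hu
      have ha : a = 0 := by omega
      rw [ha] at hab
      exact not_sq_prime hp b (by nlinarith)
    · rw [mul_I] at hu
      simp only [Zsqrtd.mk.injEq] at hu
      obtain ⟨h2, h3⟩ := hu
      have : a = 0 ∧ b = 0 := by omega
      rw [this.1, this.2] at hab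
      simp at hab
      exact hp.one_lt.ne' (by omega)
    · rw [mul_negI] at hu
      simp only [Zsqrtd.mk.injEq] at hu
      obtain ⟨h2, h3⟩ := hu
      have hba : b = a := by omega
      rw [hba] at hab
      rcases Nat.even_or_odd a with ⟨t, rfl⟩ | ⟨t, rfl⟩
      · have h4 : (t + t) ^ 2 + (t + t) ^ 2 = 8 * (t * t) := by ring
        omega
      · have h4 : (2 * t + 1) ^ 2 + (2 * t + 1) ^ 2 = 8 * (t * t) + 8 * t + 2 := by ring
        omega

theorem core_count : ∀ N : ℕ, 0 < N → (bF N : ℤ) = aF N := by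
  intro N
  induction N using Nat.strong_induction_on with
  | _ N ih =>
  intro hN
  rcases eq_or_lt_of_le (show 1 ≤ N from hN) with h1 | h1
  · rw [← h1]
    show (bF 1 : ℤ) = aF 1
    rw [aF_one]
    unfold bF
    rw [card_sect_one]
    rfl
  -- N ≥ 2
  set p := N.minFac with hpdef
  have hp : p.Prime := Nat.minFac_prime (by omega)
  haveI : Fact p.Prime := ⟨hp⟩
  have hpN : p ∣ N := N.minFac_dvd
  set e := N.factorization p with hedef
  have he : 0 < e := hp.factorization_pos_of_dvd (by omega) hpN
  have hpe : p ^ e ∣ N := Nat.ordProj_dvd N p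
  set M := N / p ^ e with hMdef
  have hMN : p ^ e * M = N := Nat.mul_div_cancel' hpe
  have hpM : ¬p ∣ M := Nat.not_dvd_ordCompl hp (by omega)
  have hM : 0 < M := Nat.div_pos (Nat.le_of_dvd (by omega) hpe) (pow_pos hp.pos e)
  have hcop : Nat.Coprime (p ^ e) M := ((Nat.Prime.coprime_iff_not_dvd hp).mpr hpM).pow_left e
  have haFsplit : aF N = aF (p ^ e) * aF M := by
    rw [← hMN]; exact aF_mult.map_mul_of_coprime hcop
  -- the conjugate-divisibility helper
  rcases hp.eq_two_or_odd' with hp2 | hpodd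
  · -- p = 2 : strip one factor of 2 using 1+i
    have h2N : 2 ∣ N := hp2 ▸ hpN
    have hnorm11 : (⟨1, 1⟩ : GaussianInt).norm = ((2 : ℕ) : ℤ) := by
      rw [norm_eq']; norm_num
    have hprime11 : Prime (⟨1, 1⟩ : GaussianInt) := by
      apply prime_of_norm_prime
      rw [hnorm11]
      norm_num
    have hdvd : ∀ z : GaussianInt, z.norm = (N : ℤ) → (⟨1, 1⟩ : GaussianInt) ∣ z := by
      intro z hz
      have hzz : ((N : ℕ) : GaussianInt) = z * star z := by
        have := Zsqrtd.norm_eq_mul_conj z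
        rw [hz] at this
        exact_mod_cast this
      have hd2 : (⟨1, 1⟩ : GaussianInt) ∣ ((2 : ℕ) : GaussianInt) := by
        refine ⟨⟨1, -1⟩, ?_⟩
        rw [Zsqrtd.ext_iff, Zsqrtd.re_mul, Zsqrtd.im_mul]
        norm_num
      have hdN : (⟨1, 1⟩ : GaussianInt) ∣ z * star z := by
        rw [← hzz]
        exact dvd_trans hd2 (natCast_dvd_natCast' h2N)
      rcases hprime11.dvd_mul.mp hdN with h3 | h3
      · exact h3
      · have h4 : star (⟨1, 1⟩ : GaussianInt) ∣ star (star z) := star_dvd_star' h3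
        rw [star_star] at h4
        have hstar11 : star (⟨1, 1⟩ : GaussianInt) = ⟨1, 1⟩ * ⟨0, -1⟩ := by
          rw [mul_negI, Zsqrtd.ext_iff, Zsqrtd.re_star, Zsqrtd.im_star]
          exact ⟨rfl, rfl⟩
        rw [hstar11] at h4
        exact dvd_trans (Dvd.intro _ rfl) h4
    have hstrip : Nat.card (Sect N) = Nat.card (Sect (N / 2)) :=
      card_strip hN (by norm_num) ⟨1, 1⟩ hnorm11 h2N hdvd
    have hrec : (bF (N / 2) : ℤ) = aF (N / 2) :=
      ih (N / 2) (Nat.div_lt_self (by omega) (by norm_num)) (by omega)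
    have hN2 : N / 2 = 2 ^ (e - 1) * M := by
      have h5 : p ^ e = 2 * 2 ^ (e - 1) := by
        rw [hp2, ← pow_succ']
        congr 1
        omega
      rw [← hMN, h5, mul_assoc]
      exact Nat.mul_div_cancel_left _ (by norm_num)
    have hcop2 : Nat.Coprime (2 ^ (e - 1)) M := by
      rw [← hp2]
      exact ((Nat.Prime.coprime_iff_not_dvd hp).mpr hpM).pow_left _
    have haF2 : aF (N / 2) = aF N := by
      rw [hN2, haFsplit, hp2]
      rw [aF_mult.map_mul_of_coprime hcop2]
      rw [aF_two_pow, aF_two_pow]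
    rw [show bF N = Nat.card (Sect N) from rfl, hstrip, ← haF2]
    exact hrec
  -- p odd
  rcases Nat.lt_or_ge (p % 4) 2 with hp4 | hp4
  · -- p % 4 = 1 (0 impossible for odd p)
    have hp1 : p % 4 = 1 := by
      have := Nat.odd_iff.mp hpodd
      omega
    obtain ⟨π, hπn, hna⟩ := exists_gauss_prime hp hp1
    have hsplit : Nat.card (Sect (p ^ e * M)) = (e + 1) * Nat.card (Sect M) :=
      card_split hp hM hpM π hπn hna
    have hrec : (bF M : ℤ) = aF M := by
      apply ih M _ hM
      calc M < p ^ e * M := by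
              have : 1 < p ^ e := Nat.one_lt_pow he.ne' hp.one_lt
              nlinarith
           _ = N := hMN
    rw [haFsplit, aF_prime_pow_one hp hp1]
    unfold bF
    rw [← hMN, hsplit]
    push_cast
    rw [show ((Nat.card (Sect M) : ℤ)) = aF M from hrec]
  · -- p % 4 = 3
    have hp3 : p % 4 = 3 := by
      have := Nat.odd_iff.mp hpodd
      omega
    have hprimep : Prime ((p : ℕ) : GaussianInt) :=
      (GaussianInt.prime_iff_mod_four_eq_three_of_nat_prime p).mpr hp3
    have hdvdp : ∀ z : GaussianInt, z.norm = (N : ℤ) → ((p : ℕ) : GaussianInt) ∣ z := by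
      intro z hz
      have hzz : ((N : ℕ) : GaussianInt) = z * star z := by
        have := Zsqrtd.norm_eq_mul_conj z
        rw [hz] at this
        exact_mod_cast this
      have hdN : ((p : ℕ) : GaussianInt) ∣ z * star z := by
        rw [← hzz]; exact natCast_dvd_natCast' hpN
      rcases hprimep.dvd_mul.mp hdN with h3 | h3
      · exact h3
      · have h4 := star_dvd_star' h3
        rwa [star_star, star_natCast''] at h4
    rcases Nat.lt_or_ge e 2 with he2 | he2
    · -- e = 1 : empty sector
      have he1 : e = 1 := by omega
      have hempty : IsEmpty (Sect N) := by
        constructor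
        rintro ⟨z, hz, hzs⟩
        obtain ⟨t, ht⟩ := hdvdp z hz
        have hnt : (N : ℤ) = (p : ℤ) * (p : ℤ) * t.norm := by
          rw [← hz, ht, Zsqrtd.norm_mul, Zsqrtd.norm_natCast]
        have htn : 0 ≤ t.norm := Zsqrtd.norm_nonneg (by norm_num) t
        have hp2N : (p * p : ℕ) ∣ N := by
          refine ⟨t.norm.toNat, ?_⟩
          have : ((N : ℕ) : ℤ) = ((p * p * t.norm.toNat : ℕ) : ℤ) := by
            push_cast
            rw [Int.toNat_of_nonneg htn]
            exact hnt
          exact_mod_cast this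
        have : p * p ∣ p ^ e * M := hMN ▸ hp2N
        rw [he1, pow_one] at this
        obtain ⟨s, hs⟩ := this
        apply hpM
        refine ⟨s, ?_⟩
        have hppos : 0 < p := hp.pos
        have : p * M = p * (p * s) := by
          rw [← mul_assoc, ← hs]
        exact Nat.eq_of_mul_eq_mul_left hppos this
      have hbF0 : bF N = 0 := by
        unfold bF
        exact @Nat.card_of_isEmpty _ hempty
      rw [hbF0, haFsplit, he1, aF_prime_pow_three hp hp3 1]
      norm_num
    · -- e ≥ 2 : strip p^2
      have hp2N : p ^ 2 ∣ N := dvd_trans (pow_dvd_pow p he2) hpe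
      have hnormp : ((p : ℕ) : GaussianInt).norm = ((p ^ 2 : ℕ) : ℤ) := by
        rw [Zsqrtd.norm_natCast]
        push_cast
        ring
      have hstrip : Nat.card (Sect N) = Nat.card (Sect (N / p ^ 2)) :=
        card_strip hN (pow_pos hp.pos 2) ((p : ℕ) : GaussianInt) hnormp hp2N hdvdp
      have hNp2 : N / p ^ 2 = p ^ (e - 2) * M := by
        rw [← hMN]
        rw [show p ^ e = p ^ 2 * p ^ (e - 2) by rw [← pow_add]; congr 1; omega]
        rw [mul_assoc]
        exact Nat.mul_div_cancel_left _ (pow_pos hp.pos 2)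
      have hp2gt : 1 < p ^ 2 := by nlinarith [hp.two_le]
      have hrec : (bF (N / p ^ 2) : ℤ) = aF (N / p ^ 2) := by
        apply ih _ (Nat.div_lt_self (by omega) hp2gt)
        rw [hNp2]
        exact Nat.mul_pos (pow_pos hp.pos _) hM
      have haFp2 : aF (N / p ^ 2) = aF N := by
        rw [hNp2, haFsplit]
        rw [aF_mult.map_mul_of_coprime (((Nat.Prime.coprime_iff_not_dvd hp).mpr hpM).pow_left _ : Nat.Coprime (p ^ (e-2)) M)]
        rw [aF_prime_pow_three hp hp3, aF_prime_pow_three hp hp3]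
        rw [show (e - 2) % 2 = e % 2 by omega]
      rw [show bF N = Nat.card (Sect N) from rfl, hstrip, ← haFp2]
      exact hrec
end P5
section P6
open Finset

lemma chi_odd (k : ℕ) : chi (2 * k + 1) = (-1 : ℤ) ^ k := by
  rcases Nat.even_or_odd k with hk | hk
  · rw [hk.neg_one_pow]
    obtain ⟨t, rfl⟩ := hk
    have : 2 * (t + t) + 1 = 4 * t + 1 := by ring
    rw [this]
    simp [chi, Nat.add_mul_mod_self_left]
  · rw [hk.neg_one_pow]
    obtain ⟨t, rfl⟩ := hk
    have : 2 * (2 * t + 1) + 1 = 4 * t + 3 := by ring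
    rw [this]
    simp [chi]

lemma chi_even {d : ℕ} (hd : d % 2 = 0) : chi d = 0 := by
  unfold chi
  have h1 : d % 4 ≠ 1 := by omega
  have h3 : d % 4 ≠ 3 := by omega
  rw [if_neg h1, if_neg h3]

/-- The Lambert series side. -/
theorem lhs_eq (q : ℂ) (hq : ‖q‖ < 1) :
    ∑' n : ℕ, q ^ (n + 1) / (1 + q ^ (2 * (n + 1))) = ∑' N : ℕ, (aF N : ℂ) * q ^ N := by
  have hq' : ‖q‖ < 1 := hq
  set f : ℕ × ℕ → ℂ := fun p => (-1 : ℂ) ^ p.2 * q ^ ((p.1 + 1) * (2 * p.2 + 1)) with hfdef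
  -- summability
  have hfs : Summable f := by
    apply Summable.of_norm
    have hmaj : Summable (fun p : ℕ × ℕ => ‖q‖ ^ p.1 * ‖q‖ ^ p.2) :=
      Summable.mul_of_nonneg (summable_geometric_of_lt_one (norm_nonneg q) hq')
        (summable_geometric_of_lt_one (norm_nonneg q) hq')
        (fun n => pow_nonneg (norm_nonneg q) n) (fun n => pow_nonneg (norm_nonneg q) n)
    apply Summable.of_nonneg_of_le (fun p => norm_nonneg _) _ hmaj
    rintro ⟨m, k⟩
    have h1 : ‖f (m, k)‖ = ‖q‖ ^ ((m + 1) * (2 * k + 1)) := by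
      show ‖(-1 : ℂ) ^ k * q ^ ((m + 1) * (2 * k + 1))‖ = _
      rw [_root_.norm_mul, _root_.norm_pow, _root_.norm_pow, _root_.norm_neg]
      norm_num
    rw [h1, ← pow_add]
    exact pow_le_pow_of_le_one (norm_nonneg q) (le_of_lt hq') (by nlinarith)
  -- inner geometric sums
  have hgeom : ∀ m : ℕ, q ^ (m + 1) / (1 + q ^ (2 * (m + 1))) = ∑' k : ℕ, f (m, k) := by
    intro m
    have hr : ‖-(q ^ (2 * (m + 1)))‖ < 1 := by
      rw [_root_.norm_neg, _root_.norm_pow]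
      exact pow_lt_one₀ (norm_nonneg q) hq' (by omega)
    have h2 : ∑' k : ℕ, (-(q ^ (2 * (m + 1)))) ^ k = (1 + q ^ (2 * (m + 1)))⁻¹ := by
      rw [tsum_geometric_of_norm_lt_one hr, sub_neg_eq_add]
    have h3 : ∀ k : ℕ, f (m, k) = q ^ (m + 1) * (-(q ^ (2 * (m + 1)))) ^ k := by
      intro k
      show (-1 : ℂ) ^ k * q ^ ((m + 1) * (2 * k + 1)) = _
      rw [neg_pow (q ^ (2 * (m + 1))) k]
      rw [show (m + 1) * (2 * k + 1) = (m + 1) + 2 * (m + 1) * k by ring, pow_add, pow_mul]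
      ring
    rw [tsum_congr h3, tsum_mul_left, h2, div_eq_mul_inv]
  -- regroup into double sum
  have hdouble : ∑' n : ℕ, q ^ (n + 1) / (1 + q ^ (2 * (n + 1))) = ∑' p : ℕ × ℕ, f p := by
    rw [Summable.tsum_prod' hfs (fun b => (hfs.prod_factor b))]
    exact tsum_congr hgeom
  -- fiber the double sum over the exponent
  have hfib := (hfs.hasSum.tsum_fiberwise (fun p : ℕ × ℕ => (p.1 + 1) * (2 * p.2 + 1))).tsum_eq
  rw [hdouble, ← hfib]
  -- now identify each fiber sum
  apply tsum_congr
  intro N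
  classical
  let eqv : {d : ℕ // d ∈ N.divisors.filter (fun d => d % 2 = 1)} ≃
      ↑((fun p : ℕ × ℕ => (p.1 + 1) * (2 * p.2 + 1)) ⁻¹' {N}) :=
    ⟨fun d => ⟨(N / d.val - 1, (d.val - 1) / 2), by
      have hd := d.prop
      rw [Finset.mem_filter, Nat.mem_divisors] at hd
      obtain ⟨⟨hdvd, hN0⟩, hodd⟩ := hd
      have hd0 : 0 < d.val := by
        rcases Nat.eq_zero_or_pos d.val with h | h
        · exfalso; apply hN0; rw [← Nat.zero_dvd, ← h]; exact hdvd
        · exact h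
      have hq1 : 0 < N / d.val := Nat.div_pos (Nat.le_of_dvd (Nat.pos_of_ne_zero hN0) hdvd) hd0
      show (N / d.val - 1 + 1) * (2 * ((d.val - 1) / 2) + 1) = N
      rw [show N / d.val - 1 + 1 = N / d.val by omega]
      rw [show 2 * ((d.val - 1) / 2) + 1 = d.val by omega]
      exact Nat.div_mul_cancel hdvd⟩,
    fun x => ⟨2 * x.val.2 + 1, by
      have hx : (x.val.1 + 1) * (2 * x.val.2 + 1) = N := x.prop
      rw [Finset.mem_filter, Nat.mem_divisors]
      refine ⟨⟨Dvd.intro_left _ hx, ?_⟩, by omega⟩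
      have h0 : 0 < (x.val.1 + 1) * (2 * x.val.2 + 1) := by positivity
      omega⟩,
    by
      rintro ⟨d, hd⟩
      rw [Finset.mem_filter, Nat.mem_divisors] at hd
      obtain ⟨⟨hdvd, hN0⟩, hodd⟩ := hd
      apply Subtype.ext
      simp only
      omega,
    by
      rintro ⟨⟨m, k⟩, hx⟩
      have hx' : (m + 1) * (2 * k + 1) = N := hx
      apply Subtype.ext
      simp only
      have h2 : N / (2 * k + 1) = m + 1 := by
        rw [← hx']
        exact Nat.mul_div_cancel _ (by omega)
      rw [Prod.ext_iff]
      constructor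
      · simp only
        omega
      · simp only
        omega⟩
  rw [← eqv.tsum_eq]
  have hterm : ∀ d : {d : ℕ // d ∈ N.divisors.filter (fun d => d % 2 = 1)},
      f ((eqv d).val) = (chi d.val : ℂ) * q ^ N := by
    intro d
    have hd := d.prop
    rw [Finset.mem_filter, Nat.mem_divisors] at hd
    obtain ⟨⟨hdvd, hN0⟩, hodd⟩ := hd
    have hEd : ((eqv d).val.1 + 1) * (2 * (eqv d).val.2 + 1) = N := (eqv d).prop
    have hsnd : ((eqv d).val).2 = (d.val - 1) / 2 := rfl
    show (-1 : ℂ) ^ ((eqv d).val).2 * q ^ (((eqv d).val.1 + 1) * (2 * (eqv d).val.2 + 1)) = _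
    rw [hEd, hsnd]
    congr 1
    rw [show (-1 : ℂ) ^ ((d.val - 1) / 2) = ((((-1 : ℤ) ^ ((d.val - 1) / 2)) : ℤ) : ℂ) by push_cast; ring]
    congr 1
    rw [← chi_odd ((d.val - 1) / 2)]
    congr 1
    omega
  rw [tsum_congr hterm,
    Finset.tsum_subtype (N.divisors.filter (fun d => d % 2 = 1)) (fun d => (chi d : ℂ) * q ^ N)]
  rw [← Finset.sum_mul]
  rw [show ∑ d ∈ N.divisors.filter (fun d => d % 2 = 1), (chi d : ℂ)
      = ((∑ d ∈ N.divisors.filter (fun d => d % 2 = 1), chi d : ℤ) : ℂ) by push_cast; ring]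
  congr 2
  rw [Finset.sum_filter_of_ne, ← aF_apply]
  intro d _ hne
  by_contra h
  exact hne (by exact_mod_cast chi_even (by omega))
end P6
section P7
open Finset

/-- The lattice-point series side. -/
theorem rhs_eq (q : ℂ) (hq : ‖q‖ < 1) :
    ∑' n : ℕ, ∑ j ∈ Finset.Icc (-(n : ℤ)) ((n : ℤ) + 1), q ^ ((n + 1) ^ 2 + j.natAbs ^ 2)
      = ∑' N : ℕ, (bF N : ℂ) * q ^ N := by
  have hq' : ‖q‖ < 1 := hq
  set F : ((n : ℕ) × {j : ℤ // j ∈ Finset.Icc (-(n : ℤ)) ((n : ℤ) + 1)}) → ℂ :=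
    fun x => q ^ ((x.1 + 1) ^ 2 + x.2.val.natAbs ^ 2) with hFdef
  -- summability
  have hnorm : Summable (fun x => ‖F x‖) := by
    rw [summable_sigma_of_nonneg (fun x => norm_nonneg _)]
    refine ⟨fun n => Summable.of_finite, ?_⟩
    have hB : Summable (fun n : ℕ => (2 * (n : ℝ) + 2) * ‖q‖ ^ (n + 1)) := by
      have hgeo := summable_geometric_of_lt_one (norm_nonneg q) hq'
      have hpow := summable_pow_mul_geometric_of_norm_lt_one 1 (r := ‖q‖)
        (by rwa [Real.norm_eq_abs, abs_of_nonneg (norm_nonneg q)])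
      have h1 : (fun n : ℕ => (2 * (n : ℝ) + 2) * ‖q‖ ^ (n + 1))
          = fun n : ℕ => (2 * ‖q‖) * ((n : ℝ) ^ 1 * ‖q‖ ^ n) + (2 * ‖q‖) * ‖q‖ ^ n := by
        funext n; rw [pow_succ]; ring
      rw [h1]
      exact (hpow.mul_left _).add (hgeo.mul_left _)
    apply Summable.of_nonneg_of_le (fun n => tsum_nonneg (fun j => norm_nonneg _)) _ hB
    intro n
    have heval : ∑' (j : {j : ℤ // j ∈ Finset.Icc (-(n : ℤ)) ((n : ℤ) + 1)}), ‖F ⟨n, j⟩‖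
        = ∑ j ∈ Finset.Icc (-(n : ℤ)) ((n : ℤ) + 1), ‖q‖ ^ ((n + 1) ^ 2 + j.natAbs ^ 2) := by
      rw [← Finset.tsum_subtype]
      apply tsum_congr
      intro j
      show ‖q ^ ((n + 1) ^ 2 + j.val.natAbs ^ 2)‖ = _
      rw [_root_.norm_pow]
    rw [heval]
    have hle := Finset.sum_le_card_nsmul (Finset.Icc (-(n : ℤ)) ((n : ℤ) + 1))
      (fun j => ‖q‖ ^ ((n + 1) ^ 2 + j.natAbs ^ 2)) (‖q‖ ^ (n + 1)) ?_
    · have hcard : (Finset.Icc (-(n : ℤ)) ((n : ℤ) + 1)).card = 2 * n + 2 := by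
        rw [Int.card_Icc]
        omega
      rw [hcard] at hle
      apply le_trans hle
      rw [nsmul_eq_mul]
      apply le_of_eq
      push_cast
      ring
    · intro j _
      apply pow_le_pow_of_le_one (norm_nonneg q) (le_of_lt hq')
      nlinarith
  have hF : Summable F := Summable.of_norm hnorm
  -- RHS as a sigma sum
  have hsig : ∑' n : ℕ, ∑ j ∈ Finset.Icc (-(n : ℤ)) ((n : ℤ) + 1), q ^ ((n + 1) ^ 2 + j.natAbs ^ 2)
      = ∑' x, F x := by
    rw [Summable.tsum_sigma hF]
    apply tsum_congr
    intro n
    rw [← Finset.tsum_subtype]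
  rw [hsig]
  -- fiber over the exponent
  have hfib := (hF.hasSum.tsum_fiberwise (fun x => (x.1 + 1) ^ 2 + x.2.val.natAbs ^ 2)).tsum_eq
  rw [← hfib]
  apply tsum_congr
  intro N
  -- identify the fiber with Sect N
  have qext : ∀ x y : ((n : ℕ) × {j : ℤ // j ∈ Finset.Icc (-(n : ℤ)) ((n : ℤ) + 1)}),
      x.1 = y.1 → x.2.val = y.2.val → x = y := by
    rintro ⟨n, j, hj⟩ ⟨m, k, hk⟩ h1 h2
    simp only at h1 h2
    subst h1
    exact congrArg _ (Subtype.ext h2)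
  let e : ↑((fun x : ((n : ℕ) × {j : ℤ // j ∈ Finset.Icc (-(n : ℤ)) ((n : ℤ) + 1)}) =>
      (x.1 + 1) ^ 2 + x.2.val.natAbs ^ 2) ⁻¹' {N}) ≃ Sect N :=
    ⟨fun x => ⟨⟨(x.val.1 : ℤ) + 1, x.val.2.val⟩, by
        have hx : (x.val.1 + 1) ^ 2 + x.val.2.val.natAbs ^ 2 = N := x.prop
        rw [norm_eq']
        show ((x.val.1 : ℤ) + 1) * ((x.val.1 : ℤ) + 1) + x.val.2.val * x.val.2.val = (N : ℤ)
        have h2 : (((x.val.1 + 1) ^ 2 + x.val.2.val.natAbs ^ 2 : ℕ) : ℤ) = (N : ℤ) := by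
          exact_mod_cast congrArg (Nat.cast : ℕ → ℤ) hx
        push_cast at h2
        linear_combination h2 - sq_abs (x.val.2.val), by
        have hj := x.val.2.prop
        rw [Finset.mem_Icc] at hj
        refine ⟨?_, ?_, ?_⟩
        · show 1 ≤ (x.val.1 : ℤ) + 1
          omega
        · show -((x.val.1 : ℤ) + 1) < x.val.2.val
          omega
        · show x.val.2.val ≤ (x.val.1 : ℤ) + 1
          omega⟩,
    fun z => ⟨⟨(z.val.re - 1).toNat, ⟨z.val.im, by
        obtain ⟨hz1, hz2, hz3⟩ := z.prop.2
        rw [Finset.mem_Icc]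
        constructor <;> omega⟩⟩, by
        obtain ⟨hz1, hz2, hz3⟩ := z.prop.2
        have hzn := z.prop.1
        rw [norm_eq'] at hzn
        show ((z.val.re - 1).toNat + 1) ^ 2 + z.val.im.natAbs ^ 2 = N
        have h1 : ((z.val.re - 1).toNat : ℤ) = z.val.re - 1 := Int.toNat_of_nonneg (by omega)
        have h2 : ((((z.val.re - 1).toNat + 1) ^ 2 + z.val.im.natAbs ^ 2 : ℕ) : ℤ)
            = (N : ℤ) := by
          push_cast [h1]
          linear_combination hzn + sq_abs (z.val.im)
        exact_mod_cast h2⟩,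
    by
      intro x
      apply Subtype.ext
      apply qext
      · show ((x.val.1 : ℤ) + 1 - 1).toNat = x.val.1
        omega
      · rfl,
    by
      intro z
      apply Subtype.ext
      obtain ⟨hz1, hz2, hz3⟩ := z.prop.2
      rw [Zsqrtd.ext_iff]
      constructor
      · show ((z.val.re - 1).toNat : ℤ) + 1 = z.val.re
        omega
      · rfl⟩
  have hcard : Nat.card (↑((fun x : ((n : ℕ) × {j : ℤ // j ∈ Finset.Icc (-(n : ℤ)) ((n : ℤ) + 1)}) =>
      (x.1 + 1) ^ 2 + x.2.val.natAbs ^ 2) ⁻¹' {N})) = bF N := Nat.card_congr e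
  have hconst : ∀ x : ↑((fun x : ((n : ℕ) × {j : ℤ // j ∈ Finset.Icc (-(n : ℤ)) ((n : ℤ) + 1)}) =>
      (x.1 + 1) ^ 2 + x.2.val.natAbs ^ 2) ⁻¹' {N}), F x.val = q ^ N := by
    intro x
    have hx : (x.val.1 + 1) ^ 2 + x.val.2.val.natAbs ^ 2 = N := x.prop
    show q ^ ((x.val.1 + 1) ^ 2 + x.val.2.val.natAbs ^ 2) = q ^ N
    rw [hx]
  rw [tsum_congr hconst, tsum_const, hcard, nsmul_eq_mul]
end P7

section P8
open Finset GaussianInt Zsqrtd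

lemma aF_zero : aF 0 = 0 := by
  rw [aF_apply]
  simp

lemma bF_zero : bF 0 = 0 := by
  unfold bF
  have : IsEmpty (Sect 0) := by
    constructor
    rintro ⟨z, hz, hz1, hz2, hz3⟩
    have : z = 0 := by
      rw [← GaussianInt.norm_eq_zero]
      exact_mod_cast hz
    rw [this] at hz1
    simp at hz1
  exact @Nat.card_of_isEmpty _ this

theorem stmt0 (q : ℂ) (hq : ‖q‖ < 1) :
    ∑' n : ℕ, q ^ (n + 1) / (1 + q ^ (2 * (n + 1))) =
    ∑' n : ℕ, ∑ j ∈ Finset.Icc (-(n : ℤ)) ((n : ℤ) + 1),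
      q ^ ((n + 1) ^ 2 + j.natAbs ^ 2) := by
  rw [lhs_eq q hq, rhs_eq q hq]
  apply tsum_congr
  intro N
  congr 1
  rcases Nat.eq_zero_or_pos N with h | h
  · rw [h, aF_zero, bF_zero]
    simp
  · have := core_count N h
    rw [← this]
    push_cast
    ring
end P8
end

section
/- For |q|<1, $\sum_{n=1}^{\infty}\sum_{m=-n+1}^{n} q^{n^2+m^2} = -\frac{1}{4} + \frac{1}{4}\Big(\sum_{n=-\infty}^{\infty} q^{2n^2}\Big)^2 + q\Big(\sum_{n=0}^{\infty} q^{2n(n+1)}\Big)^2$. -/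
open Finset

private lemma geo {q : ℂ} (hq : ‖q‖ < 1) :
    Summable fun n : ℕ => (‖q‖) ^ n :=
  summable_geometric_of_lt_one (norm_nonneg _) hq

private lemma sum1 {q : ℂ} (hq : ‖q‖ < 1) {e : ℕ → ℕ} (he : ∀ n, n ≤ e n) :
    Summable fun n => q ^ e n := by
  refine Summable.of_norm (Summable.of_nonneg_of_le (fun n => norm_nonneg _) (fun n => ?_) (geo hq))
  rw [norm_pow]
  exact pow_le_pow_of_le_one (norm_nonneg _) hq.le (he n)

private lemma sum2 {q : ℂ} (hq : ‖q‖ < 1) {e : ℕ × ℕ → ℕ} (he : ∀ p, p.1 + p.2 ≤ e p) :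
    Summable fun p => q ^ e p := by
  have hg : Summable fun p : ℕ × ℕ => (‖q‖) ^ p.1 * (‖q‖) ^ p.2 :=
    (geo hq).mul_of_nonneg (geo hq) (fun n => pow_nonneg (norm_nonneg _) n)
      (fun n => pow_nonneg (norm_nonneg _) n)
  refine Summable.of_norm (Summable.of_nonneg_of_le (fun p => norm_nonneg _) (fun p => ?_) hg)
  rw [norm_pow, ← pow_add]
  exact pow_le_pow_of_le_one (norm_nonneg _) hq.le (he p)

private abbrev TT : Type := Σ n : ℕ, {m : ℤ // m ∈ Finset.Icc (-(n : ℤ)) ((n : ℤ) + 1)}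

private def Θ : TT → ℕ × ℕ := fun x =>
  if 1 ≤ x.2.1 then (x.2.1.natAbs - 1, x.1 + 1) else (x.1, x.2.1.natAbs)

private lemma theta_bij : Function.Bijective Θ := by
  constructor
  · rintro ⟨n, m, hm⟩ ⟨n', m', hm'⟩ h
    rw [Finset.mem_Icc] at hm hm'
    have key : ∀ (a a' : ℕ) (b b' : ℤ) hb hb', a = a' → b = b' →
        (⟨a, ⟨b, hb⟩⟩ : TT) = ⟨a', ⟨b', hb'⟩⟩ := by
      rintro a _ b _ _ _ rfl rfl; rfl
    simp only [Θ] at h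
    split_ifs at h with h1 h2 h2 <;>
      (rw [Prod.mk.injEq] at h; exact key _ _ _ _ _ _ (by omega) (by omega))
  · rintro ⟨x, y⟩
    by_cases hxy : x + 1 ≤ y
    · refine ⟨⟨y - 1, ⟨(x : ℤ) + 1, by rw [Finset.mem_Icc]; omega⟩⟩, ?_⟩
      simp only [Θ]
      rw [if_pos (by omega), Prod.mk.injEq]
      constructor <;> omega
    · refine ⟨⟨x, ⟨-(y : ℤ), by rw [Finset.mem_Icc]; omega⟩⟩, ?_⟩
      simp only [Θ]
      rw [if_neg (by omega), Prod.mk.injEq]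
      constructor <;> omega

private def Spar : Set (ℕ × ℕ) := {p | (p.1 + p.2) % 2 = 1}

private def Φe : ℕ × ℕ → ↥Spar := fun p =>
  if h : p.2 ≤ p.1 + 1 then
    ⟨(p.1 + p.2, p.1 + 1 - p.2), by simp only [Spar, Set.mem_setOf_eq]; omega⟩
  else ⟨(p.2 - p.1 - 2, p.1 + p.2 + 1), by simp only [Spar, Set.mem_setOf_eq]; omega⟩

private def Φo : ℕ × ℕ → ↥(Sparᶜ) := fun p =>
  if h : p.2 ≤ p.1 then
    ⟨(p.1 + p.2, p.1 - p.2), by simp only [Spar, Set.mem_compl_iff, Set.mem_setOf_eq]; omega⟩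
  else ⟨(p.2 - p.1 - 1, p.2 + p.1 + 1), by
    simp only [Spar, Set.mem_compl_iff, Set.mem_setOf_eq]; omega⟩

private lemma phie_bij : Function.Bijective Φe := by
  constructor
  · rintro ⟨a, b⟩ ⟨a', b'⟩ h
    simp only [Φe] at h
    split_ifs at h <;>
      (rw [Subtype.mk.injEq, Prod.mk.injEq] at h; rw [Prod.mk.injEq]; omega)
  · rintro ⟨⟨x, y⟩, hxy⟩
    simp only [Spar, Set.mem_setOf_eq] at hxy
    by_cases h : y ≤ x + 1
    · refine ⟨(x - (x + 1 - y) / 2, (x + 1 - y) / 2), ?_⟩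
      simp only [Φe]
      rw [dif_pos (by omega), Subtype.mk.injEq, Prod.mk.injEq]
      omega
    · refine ⟨((y - x - 3) / 2, (x + y + 1) / 2), ?_⟩
      simp only [Φe]
      rw [dif_neg (by omega), Subtype.mk.injEq, Prod.mk.injEq]
      omega

private lemma phio_bij : Function.Bijective Φo := by
  constructor
  · rintro ⟨a, b⟩ ⟨a', b'⟩ h
    simp only [Φo] at h
    split_ifs at h <;>
      (rw [Subtype.mk.injEq, Prod.mk.injEq] at h; rw [Prod.mk.injEq]; omega)
  · rintro ⟨⟨x, y⟩, hxy⟩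
    simp only [Spar, Set.mem_compl_iff, Set.mem_setOf_eq] at hxy
    by_cases h : y ≤ x
    · refine ⟨((x + y) / 2, (x - y) / 2), ?_⟩
      simp only [Φo]
      rw [dif_pos (by omega), Subtype.mk.injEq, Prod.mk.injEq]
      omega
    · refine ⟨((y - x - 2) / 2, (x + y) / 2), ?_⟩
      simp only [Φo]
      rw [dif_neg (by omega), Subtype.mk.injEq, Prod.mk.injEq]
      omega

theorem stmt2 (q : ℂ) (hq : ‖q‖ < 1) :
    ∑' n : ℕ, ∑ m ∈ Finset.Icc (-(n : ℤ)) ((n : ℤ) + 1),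
      q ^ ((n + 1) ^ 2 + m.natAbs ^ 2) =
    -(1 / 4) + (1 / 4) * (∑' n : ℤ, q ^ (2 * n.natAbs ^ 2)) ^ 2 +
      q * (∑' n : ℕ, q ^ (2 * n * (n + 1))) ^ 2 := by
  classical
  set f : ℕ × ℕ → ℂ := fun p => q ^ ((p.1 + 1) ^ 2 + p.2 ^ 2) with hfdef
  have hf : Summable f := by
    refine sum2 hq (fun p => ?_)
    have h1 := Nat.le_self_pow (two_ne_zero) (p.1 + 1)
    have h2 := Nat.le_self_pow (two_ne_zero) p.2
    omega
  have hfe : Summable (fun p : ℕ × ℕ => q ^ (2 * (p.1 + 1) ^ 2 + 2 * p.2 ^ 2)) := by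
    refine sum2 hq (fun p => ?_)
    have h1 := Nat.le_self_pow (two_ne_zero) (p.1 + 1)
    have h2 := Nat.le_self_pow (two_ne_zero) p.2
    omega
  have hfo : Summable
      (fun p : ℕ × ℕ => q ^ (2 * p.1 * (p.1 + 1) + 2 * p.2 * (p.2 + 1) + 1)) := by
    refine sum2 hq (fun p => ?_)
    nlinarith [p.1.zero_le, p.2.zero_le]
  have hD1 : Summable (fun n : ℕ => q ^ (2 * (n + 1) ^ 2)) := by
    refine sum1 hq (fun n => ?_)
    have h1 := Nat.le_self_pow (two_ne_zero) (n + 1)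
    omega
  have hDb : Summable (fun n : ℕ => q ^ (2 * n ^ 2)) := by
    refine sum1 hq (fun n => ?_)
    have h1 := Nat.le_self_pow (two_ne_zero) n
    omega
  have hC : Summable (fun n : ℕ => q ^ (2 * n * (n + 1))) := by
    refine sum1 hq (fun n => ?_)
    nlinarith [n.zero_le]
  -- compatibility of Θ
  have hcompat : ∀ x : TT, f (Θ x) = q ^ ((x.1 + 1) ^ 2 + x.2.1.natAbs ^ 2) := by
    rintro ⟨n, m, hm⟩
    rw [Finset.mem_Icc] at hm
    simp only [Θ, hfdef]
    split_ifs with h1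
    · show q ^ ((m.natAbs - 1 + 1) ^ 2 + (n + 1 : ℕ) ^ 2) = _
      congr 1
      have h2 : 1 ≤ m.natAbs := by omega
      rw [Nat.sub_add_cancel h2]
      ring
    · rfl
  have hFsum : Summable (fun x : TT => q ^ ((x.1 + 1) ^ 2 + x.2.1.natAbs ^ 2)) :=
    ((Equiv.ofBijective Θ theta_bij).summable_iff.mpr hf).congr hcompat
  -- Step A : LHS = sum over TT
  have stepA : (∑' n : ℕ, ∑ m ∈ Finset.Icc (-(n : ℤ)) ((n : ℤ) + 1),
      q ^ ((n + 1) ^ 2 + m.natAbs ^ 2))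
      = ∑' x : TT, q ^ ((x.1 + 1) ^ 2 + x.2.1.natAbs ^ 2) := by
    rw [Summable.tsum_sigma hFsum]
    exact tsum_congr fun n => (Finset.tsum_subtype _ _).symm
  -- Step B : sum over TT = sum over ℕ × ℕ
  have stepB : (∑' x : TT, q ^ ((x.1 + 1) ^ 2 + x.2.1.natAbs ^ 2)) = ∑' p : ℕ × ℕ, f p := by
    rw [← Equiv.tsum_eq (Equiv.ofBijective Θ theta_bij) f]
    exact tsum_congr fun x => (hcompat x).symm
  -- even part
  have even_eq : (∑' x : ↥Spar, f ↑x) = ∑' p : ℕ × ℕ, q ^ (2 * (p.1 + 1) ^ 2 + 2 * p.2 ^ 2) := by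
    rw [← Equiv.tsum_eq (Equiv.ofBijective Φe phie_bij) (fun x : ↥Spar => f ↑x)]
    refine tsum_congr fun p => ?_
    obtain ⟨a, b⟩ := p
    show f ↑(Φe (a, b)) = _
    simp only [Φe, hfdef]
    split_ifs with h
    · show q ^ ((a + b + 1) ^ 2 + (a + 1 - b) ^ 2) = _
      congr 1
      zify [h]
      ring
    · show q ^ ((b - a - 2 + 1) ^ 2 + (a + b + 1) ^ 2) = _
      congr 1
      have h1 : a ≤ b := by omega
      have h2 : 2 ≤ b - a := by omega
      zify [h1, h2]
      ring
  have even_val : (∑' p : ℕ × ℕ, q ^ (2 * (p.1 + 1) ^ 2 + 2 * p.2 ^ 2))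
      = (∑' n : ℕ, q ^ (2 * (n + 1) ^ 2)) * ∑' n : ℕ, q ^ (2 * n ^ 2) := by
    have hsplit : ∀ p : ℕ × ℕ, q ^ (2 * (p.1 + 1) ^ 2 + 2 * p.2 ^ 2)
        = q ^ (2 * (p.1 + 1) ^ 2) * q ^ (2 * p.2 ^ 2) := fun p => pow_add q _ _
    rw [tsum_congr hsplit, Summable.tsum_prod (hfe.congr hsplit)]
    rw [tsum_congr fun a => tsum_mul_left (a := q ^ (2 * (a + 1) ^ 2))
      (f := fun b : ℕ => q ^ (2 * b ^ 2))]
    exact tsum_mul_right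
  -- odd part
  have odd_eq : (∑' x : ↥(Sparᶜ), f ↑x)
      = ∑' p : ℕ × ℕ, q ^ (2 * p.1 * (p.1 + 1) + 2 * p.2 * (p.2 + 1) + 1) := by
    rw [← Equiv.tsum_eq (Equiv.ofBijective Φo phio_bij) (fun x : ↥(Sparᶜ) => f ↑x)]
    refine tsum_congr fun p => ?_
    obtain ⟨s, t⟩ := p
    show f ↑(Φo (s, t)) = _
    simp only [Φo, hfdef]
    split_ifs with h
    · show q ^ ((s + t + 1) ^ 2 + (s - t) ^ 2) = _
      congr 1
      zify [h]
      ring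
    · show q ^ ((t - s - 1 + 1) ^ 2 + (t + s + 1) ^ 2) = _
      congr 1
      have h1 : s ≤ t := by omega
      have h2 : 1 ≤ t - s := by omega
      zify [h1, h2]
      ring
  have odd_val : (∑' p : ℕ × ℕ, q ^ (2 * p.1 * (p.1 + 1) + 2 * p.2 * (p.2 + 1) + 1))
      = (∑' n : ℕ, q ^ (2 * n * (n + 1))) * (∑' n : ℕ, q ^ (2 * n * (n + 1))) * q := by
    have hsplit : ∀ p : ℕ × ℕ, q ^ (2 * p.1 * (p.1 + 1) + 2 * p.2 * (p.2 + 1) + 1)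
        = q ^ (2 * p.1 * (p.1 + 1)) * q ^ (2 * p.2 * (p.2 + 1)) * q := by
      intro p
      rw [pow_add, pow_add, pow_one]
    rw [tsum_congr hsplit]
    have hs2 : Summable (fun p : ℕ × ℕ =>
        q ^ (2 * p.1 * (p.1 + 1)) * q ^ (2 * p.2 * (p.2 + 1)) * q) := hfo.congr hsplit
    rw [Summable.tsum_prod hs2]
    have inner : ∀ a : ℕ, (∑' b : ℕ, q ^ (2 * a * (a + 1)) * q ^ (2 * b * (b + 1)) * q)
        = q ^ (2 * a * (a + 1)) * ((∑' n : ℕ, q ^ (2 * n * (n + 1))) * q) := by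
      intro a
      calc (∑' b : ℕ, q ^ (2 * a * (a + 1)) * q ^ (2 * b * (b + 1)) * q)
          = ∑' b : ℕ, q ^ (2 * a * (a + 1)) * (q ^ (2 * b * (b + 1)) * q) :=
            tsum_congr fun b => by ring
        _ = q ^ (2 * a * (a + 1)) * ∑' b : ℕ, q ^ (2 * b * (b + 1)) * q := tsum_mul_left
        _ = q ^ (2 * a * (a + 1)) * ((∑' n : ℕ, q ^ (2 * n * (n + 1))) * q) := by
            rw [tsum_mul_right]
    calc (∑' (a : ℕ) (b : ℕ), q ^ (2 * a * (a + 1)) * q ^ (2 * b * (b + 1)) * q)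
        = ∑' a : ℕ, q ^ (2 * a * (a + 1)) * ((∑' n : ℕ, q ^ (2 * n * (n + 1))) * q) :=
          tsum_congr inner
      _ = (∑' n : ℕ, q ^ (2 * n * (n + 1))) * ((∑' n : ℕ, q ^ (2 * n * (n + 1))) * q) :=
          tsum_mul_right
      _ = (∑' n : ℕ, q ^ (2 * n * (n + 1))) * (∑' n : ℕ, q ^ (2 * n * (n + 1))) * q := by ring
  -- the base theta-like series
  have hB : (∑' n : ℕ, q ^ (2 * n ^ 2)) = 1 + ∑' n : ℕ, q ^ (2 * (n + 1) ^ 2) := by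
    rw [Summable.tsum_eq_zero_add hDb]
    norm_num
  -- the integer sum
  have hz1 : Summable (fun n : ℕ => q ^ (2 * (((n : ℤ) + 1)).natAbs ^ 2)) := by
    refine hD1.congr fun n => ?_
    rw [show (((n : ℤ) + 1)).natAbs = n + 1 by omega]
  have hz2 : Summable (fun n : ℕ => q ^ (2 * (-((n : ℤ) + 1)).natAbs ^ 2)) := by
    refine hD1.congr fun n => ?_
    rw [show ((-((n : ℤ) + 1))).natAbs = n + 1 by omega]
  have zsum : (∑' n : ℤ, q ^ (2 * n.natAbs ^ 2))
      = (∑' n : ℕ, q ^ (2 * (n + 1) ^ 2)) + 1 + ∑' n : ℕ, q ^ (2 * (n + 1) ^ 2) := by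
    rw [tsum_of_add_one_of_neg_add_one (f := fun n : ℤ => q ^ (2 * n.natAbs ^ 2)) hz1 hz2]
    have e1 : (∑' n : ℕ, q ^ (2 * (((n : ℤ) + 1)).natAbs ^ 2))
        = ∑' n : ℕ, q ^ (2 * (n + 1) ^ 2) :=
      tsum_congr fun n => by rw [show (((n : ℤ) + 1)).natAbs = n + 1 by omega]
    have e2 : (∑' n : ℕ, q ^ (2 * (-((n : ℤ) + 1)).natAbs ^ 2))
        = ∑' n : ℕ, q ^ (2 * (n + 1) ^ 2) :=
      tsum_congr fun n => by rw [show ((-((n : ℤ) + 1))).natAbs = n + 1 by omega]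
    rw [e1, e2]
    norm_num
  calc (∑' n : ℕ, ∑ m ∈ Finset.Icc (-(n : ℤ)) ((n : ℤ) + 1),
        q ^ ((n + 1) ^ 2 + m.natAbs ^ 2))
      = ∑' p : ℕ × ℕ, f p := by rw [stepA, stepB]
    _ = (∑' x : ↥Spar, f ↑x) + ∑' x : ↥(Sparᶜ), f ↑x :=
        (Summable.tsum_subtype_add_tsum_subtype_compl hf Spar).symm
    _ = (∑' n : ℕ, q ^ (2 * (n + 1) ^ 2)) * (∑' n : ℕ, q ^ (2 * n ^ 2))
        + (∑' n : ℕ, q ^ (2 * n * (n + 1))) * (∑' n : ℕ, q ^ (2 * n * (n + 1))) * q := by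
        rw [even_eq, even_val, odd_eq, odd_val]
    _ = -(1 / 4) + (1 / 4) * (∑' n : ℤ, q ^ (2 * n.natAbs ^ 2)) ^ 2 +
        q * (∑' n : ℕ, q ^ (2 * n * (n + 1))) ^ 2 := by
        rw [hB, zsum]
        ring
end

section
/- For |q|<1, the square of the theta series satisfies $\Big(\sum_{n=-\infty}^{\infty} q^{n^2}\Big)^2 = \Big(\sum_{n=-\infty}^{\infty} q^{2n^2}\Big)^2 + 4q\Big(\sum_{n=0}^{\infty} q^{2n(n+1)}\Big)^2$. -/
private lemma habs_mul (x : ℤ) : |x| * |1 + x| = x * (1 + x) := by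
  rw [← abs_mul]
  refine abs_of_nonneg ?_
  rcases le_or_gt 0 x with h | h
  · positivity
  · nlinarith

private lemma habs_mul' (x : ℤ) : |x| * |x + 1| = x * (x + 1) := by
  have h := habs_mul x
  rw [add_comm 1 x] at h
  exact h

private lemma exp_even (a b : ℤ) :
    (a+b).natAbs^2 + (a-b).natAbs^2 = 2*a.natAbs^2 + 2*b.natAbs^2 := by
  have : (((a+b).natAbs^2 + (a-b).natAbs^2 : ℕ) : ℤ) = ((2*a.natAbs^2 + 2*b.natAbs^2 : ℕ) : ℤ) := by
    push_cast [Int.natAbs_sq]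
    simp only [sq_abs]; ring
  exact_mod_cast this

private lemma exp_odd (a b : ℤ) : (a+b+1).natAbs^2 + (a-b).natAbs^2
    = 1 + (2*(a.natAbs*(a+1).natAbs) + 2*(b.natAbs*(b+1).natAbs)) := by
  have : (((a+b+1).natAbs^2 + (a-b).natAbs^2 : ℕ) : ℤ)
      = ((1 + (2*(a.natAbs*(a+1).natAbs) + 2*(b.natAbs*(b+1).natAbs)) : ℕ) : ℤ) := by
    push_cast [Int.natAbs_sq]
    simp only [sq_abs, habs_mul, habs_mul']
    ring
  exact_mod_cast this

private lemma sumnorm {q : ℂ} (hq : ‖q‖ < 1) (c : ℤ → ℕ)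
    (h1 : ∀ n : ℕ, n ≤ c n) (h2 : ∀ n : ℕ, n ≤ c (-(n+1))) :
    Summable fun n : ℤ => ‖q ^ c n‖ := by
  have hgeo : Summable fun n : ℕ => ‖q‖ ^ n :=
    summable_geometric_of_lt_one (by positivity) hq
  have key : ∀ (d : ℕ → ℕ), (∀ n, n ≤ d n) → Summable fun n : ℕ => ‖q ^ d n‖ := by
    intro d hd
    refine hgeo.of_nonneg_of_le (fun n => norm_nonneg _) (fun n => ?_)
    rw [norm_pow]
    exact pow_le_pow_of_le_one (by positivity) hq.le (hd n)
  exact Summable.of_nat_of_neg_add_one (key _ h1) (key _ h2)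

private def eEven : ℤ × ℤ ≃ {p : ℤ × ℤ // (p.1 + p.2) % 2 = 0} where
  toFun x := ⟨(x.1 + x.2, x.1 - x.2), by omega⟩
  invFun p := ((p.1.1 + p.1.2)/2, (p.1.1 - p.1.2)/2)
  left_inv x := by obtain ⟨a, b⟩ := x; simp only; ext <;> simp <;> omega
  right_inv p := by
    obtain ⟨⟨m, n⟩, h⟩ := p
    ext <;> simp <;> omega

private def eOdd : ℤ × ℤ ≃ {p : ℤ × ℤ // ¬ ((p.1 + p.2) % 2 = 0)} where
  toFun x := ⟨(x.1 + x.2 + 1, x.1 - x.2), by omega⟩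
  invFun p := ((p.1.1 + p.1.2 - 1)/2, (p.1.1 - p.1.2 - 1)/2)
  left_inv x := by obtain ⟨a, b⟩ := x; simp only; ext <;> simp <;> omega
  right_inv p := by
    obtain ⟨⟨m, n⟩, h⟩ := p
    simp only [Set.mem_setOf_eq] at h
    ext <;> simp <;> omega

theorem stmt3 (q : ℂ) (hq : ‖q‖ < 1) :
    (∑' n : ℤ, q ^ (n.natAbs ^ 2)) ^ 2 =
    (∑' n : ℤ, q ^ (2 * n.natAbs ^ 2)) ^ 2 +
      4 * q * (∑' n : ℕ, q ^ (2 * n * (n + 1))) ^ 2 := by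
  set f : ℤ → ℂ := fun n => q ^ (n.natAbs ^ 2) with hf_def
  set g : ℤ → ℂ := fun n => q ^ (2 * n.natAbs ^ 2) with hg_def
  set h : ℤ → ℂ := fun n => q ^ (2 * (n.natAbs * (n+1).natAbs)) with hh_def
  have hf_norm : Summable fun n : ℤ => ‖f n‖ := by
    refine sumnorm hq _ (fun n => ?_) (fun n => ?_)
    · simp only [Int.natAbs_natCast]
      exact Nat.le_self_pow two_ne_zero n
    · have : ((-(n+1) : ℤ)).natAbs = n + 1 := by omega
      rw [this]
      exact le_trans (Nat.le_succ n) (Nat.le_self_pow two_ne_zero _)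
  have hg_norm : Summable fun n : ℤ => ‖g n‖ := by
    refine sumnorm hq _ (fun n => ?_) (fun n => ?_)
    · simp only [Int.natAbs_natCast]
      have := Nat.le_self_pow (two_ne_zero) n
      omega
    · have : ((-(n+1) : ℤ)).natAbs = n + 1 := by omega
      rw [this]
      have := Nat.le_self_pow (two_ne_zero) (n+1)
      omega
  have hh_norm : Summable fun n : ℤ => ‖h n‖ := by
    refine sumnorm hq _ (fun n => ?_) (fun n => ?_)
    · have h1 : ((n : ℤ)).natAbs = n := Int.natAbs_natCast n
      have h2 : ((n : ℤ) + 1).natAbs = n + 1 := by omega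
      rw [h1, h2]; nlinarith
    · have h1 : ((-(n+1) : ℤ)).natAbs = n + 1 := by omega
      have h2 : ((-(n+1) : ℤ) + 1).natAbs = n := by omega
      rw [h1, h2]; nlinarith
  have hf : Summable f := hf_norm.of_norm
  have hh : Summable h := hh_norm.of_norm
  set F : ℤ × ℤ → ℂ := fun p => f p.1 * f p.2 with hF_def
  have hF : Summable F := summable_mul_of_summable_norm hf_norm hf_norm
  set S : Set (ℤ × ℤ) := {p | (p.1 + p.2) % 2 = 0} with hS_def
  have step1 : (∑' n : ℤ, f n) ^ 2 = ∑' p : ℤ × ℤ, F p := by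
    rw [sq]; exact tsum_mul_tsum_of_summable_norm hf_norm hf_norm
  have split : ∑' p : ℤ × ℤ, F p = (∑' x : S, F x) + ∑' x : ↥Sᶜ, F x :=
    (Summable.tsum_add_tsum_compl (hF.subtype _) (hF.subtype _)).symm
  have hEven : ∑' x : S, F x = (∑' n : ℤ, g n) ^ 2 := by
    have e1 : ∑' x : S, F x = ∑' p : ℤ × ℤ, F ((eEven p : {p : ℤ × ℤ // (p.1 + p.2) % 2 = 0}) : ℤ × ℤ) :=
      (eEven.tsum_eq (fun x : {p : ℤ × ℤ // (p.1 + p.2) % 2 = 0} => F (x : ℤ × ℤ))).symm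
    rw [e1]
    have hpt : ∀ p : ℤ × ℤ, F ((eEven p : {p : ℤ × ℤ // (p.1 + p.2) % 2 = 0}) : ℤ × ℤ)
        = g p.1 * g p.2 := by
      rintro ⟨a, b⟩
      show f (a + b) * f (a - b) = g a * g b
      simp only [hf_def, hg_def, ← pow_add, exp_even]
    rw [tsum_congr hpt, sq]
    exact (tsum_mul_tsum_of_summable_norm hg_norm hg_norm).symm
  have hOdd : ∑' x : ↥Sᶜ, F x = q * (∑' n : ℤ, h n) ^ 2 := by
    have e1 : ∑' x : ↥Sᶜ, F x
        = ∑' p : ℤ × ℤ, F ((eOdd p : {p : ℤ × ℤ // ¬ ((p.1 + p.2) % 2 = 0)}) : ℤ × ℤ) :=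
      (eOdd.tsum_eq (fun x : {p : ℤ × ℤ // ¬ ((p.1 + p.2) % 2 = 0)} => F (x : ℤ × ℤ))).symm
    rw [e1]
    have hpt : ∀ p : ℤ × ℤ, F ((eOdd p : {p : ℤ × ℤ // ¬ ((p.1 + p.2) % 2 = 0)}) : ℤ × ℤ)
        = q * (h p.1 * h p.2) := by
      rintro ⟨a, b⟩
      show f (a + b + 1) * f (a - b) = q * (h a * h b)
      simp only [hf_def, hh_def, ← pow_add, exp_odd]
      rw [pow_add, pow_one]
    rw [tsum_congr hpt, tsum_mul_left, sq]
    rw [tsum_mul_tsum_of_summable_norm hh_norm hh_norm]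
  have k1 : Summable fun n : ℕ => h (n : ℤ) := hh.comp_injective Nat.cast_injective
  have k2 : Summable fun n : ℕ => h (-((n : ℤ)+1)) := by
    refine hh.comp_injective ?_
    intro a b hab
    simpa using hab
  have hT1 : ∀ n : ℕ, h (n : ℤ) = q ^ (2*n*(n+1)) := by
    intro n
    simp only [hh_def]
    congr 1
    have a1 : ((n : ℤ)).natAbs = n := Int.natAbs_natCast n
    have a2 : ((n : ℤ) + 1).natAbs = n + 1 := by omega
    rw [a1, a2]; ring
  have hT2 : ∀ n : ℕ, h (-((n : ℤ)+1)) = q ^ (2*n*(n+1)) := by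
    intro n
    simp only [hh_def]
    congr 1
    have a1 : ((-((n:ℤ)+1) : ℤ)).natAbs = n + 1 := by omega
    have a2 : ((-((n:ℤ)+1) : ℤ) + 1).natAbs = n := by omega
    rw [a1, a2]; ring
  have hsplit2 : ∑' n : ℤ, h n = 2 * ∑' n : ℕ, q ^ (2 * n * (n + 1)) := by
    rw [tsum_of_nat_of_neg_add_one k1 k2, tsum_congr hT1, tsum_congr hT2, two_mul]
  rw [step1, split, hEven, hOdd, hsplit2]
  ring
end

section
/- For every nonnegative integer $n$, the terminating ${}_3\phi_2$ series ${}_3\phi_2(q^{-2n},q^{2n+2},q; -q^2,q^3; q^2, q^2) = \sum_{k=0}^{n} \frac{(q^{-2n};q^2)_k(q^{2n+2};q^2)_k(q;q^2)_k}{(q^2;q^2)_k(-q^2;q^2)_k(q^3;q^2)_k} q^{2k}$ equals $\frac{(1-q)q^n}{1-q^{2n+1}} \sum_{j=-n}^{n} q^{j^2}$. -/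
open Finset

namespace Stmt8Aux

noncomputable def pA1 (q : ℂ) (n k : ℕ) : ℂ := ∏ i ∈ range k, (1 - (q ^ (2*n))⁻¹ * q ^ (2*i))
noncomputable def pA2 (q : ℂ) (n k : ℕ) : ℂ := ∏ i ∈ range k, (1 - q ^ (2*n+2) * q ^ (2*i))
noncomputable def pA3 (q : ℂ) (k : ℕ) : ℂ := ∏ i ∈ range k, (1 - q * q ^ (2*i))
noncomputable def pB1 (q : ℂ) (k : ℕ) : ℂ := ∏ i ∈ range k, (1 - q ^ 2 * q ^ (2*i))
noncomputable def pB2 (q : ℂ) (k : ℕ) : ℂ := ∏ i ∈ range k, (1 + q ^ 2 * q ^ (2*i))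
noncomputable def pB3 (q : ℂ) (k : ℕ) : ℂ := ∏ i ∈ range k, (1 - q ^ 3 * q ^ (2*i))

noncomputable def tm (q : ℂ) (n k : ℕ) : ℂ :=
  pA1 q n k * pA2 q n k * pA3 q k / (pB1 q k * pB2 q k * pB3 q k) * q ^ (2*k)

noncomputable def Hh (q : ℂ) (n k : ℕ) : ℂ :=
  q ^ (2*n+4) * (1 - q ^ (4*n+6)) * (1 - q ^ (2*k)) * (1 + q ^ (2*k)) * (q * q ^ (2*k) - 1) *
    (pA1 q (n+2) k * pA2 q n k * pA3 q k) /
    ((q ^ (2*n+2) - 1) * (q ^ (2*n+4) - 1) * (pB1 q k * pB2 q k * pB3 q k))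

variable {q : ℂ}

lemma nzs (hq1 : ∀ m : ℕ, 0 < m → q ^ m ≠ 1) (m : ℕ) (hm : 0 < m) : (1 : ℂ) - q ^ m ≠ 0 :=
  sub_ne_zero.mpr fun h => hq1 m hm h.symm

lemma nzs' (hq1 : ∀ m : ℕ, 0 < m → q ^ m ≠ 1) (m : ℕ) (hm : 0 < m) : q ^ m - 1 ≠ 0 :=
  sub_ne_zero.mpr (hq1 m hm)

lemma nzp (hq1 : ∀ m : ℕ, 0 < m → q ^ m ≠ 1) (m : ℕ) (hm : 0 < m) : (1 : ℂ) + q ^ m ≠ 0 := by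
  intro h
  have hm1 : q ^ m = -1 := by linear_combination h
  exact hq1 (2*m) (by omega) (by rw [two_mul, pow_add, hm1]; ring)

lemma pB1_ne (hq1 : ∀ m : ℕ, 0 < m → q ^ m ≠ 1) (k : ℕ) : pB1 q k ≠ 0 := by
  refine prod_ne_zero_iff.mpr fun i _ => ?_
  have h : q ^ 2 * q ^ (2*i) = q ^ (2*i+2) := by rw [← pow_add]; ring_nf
  rw [h]; exact nzs hq1 _ (by omega)

lemma pB2_ne (hq1 : ∀ m : ℕ, 0 < m → q ^ m ≠ 1) (k : ℕ) : pB2 q k ≠ 0 := by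
  refine prod_ne_zero_iff.mpr fun i _ => ?_
  have h : q ^ 2 * q ^ (2*i) = q ^ (2*i+2) := by rw [← pow_add]; ring_nf
  rw [h]; exact nzp hq1 _ (by omega)

lemma pB3_ne (hq1 : ∀ m : ℕ, 0 < m → q ^ m ≠ 1) (k : ℕ) : pB3 q k ≠ 0 := by
  refine prod_ne_zero_iff.mpr fun i _ => ?_
  have h : q ^ 3 * q ^ (2*i) = q ^ (2*i+3) := by rw [← pow_add]; ring_nf
  rw [h]; exact nzs hq1 _ (by omega)

lemma shA1 (hq : q ≠ 0) (n k : ℕ) :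
    pA1 q (n+1) k * (1 - (q ^ (2*(n+1)))⁻¹ * q ^ (2*k)) = (1 - (q ^ (2*(n+1)))⁻¹) * pA1 q n k := by
  unfold pA1
  rw [← prod_range_succ (fun i => 1 - (q ^ (2*(n+1)))⁻¹ * q ^ (2*i)) k,
      prod_range_succ' (fun i => 1 - (q ^ (2*(n+1)))⁻¹ * q ^ (2*i)) k]
  have he : ∀ i : ℕ, (q ^ (2*(n+1)))⁻¹ * q ^ (2*(i+1)) = (q ^ (2*n))⁻¹ * q ^ (2*i) := by
    intro i
    have h1 : q ^ (2*(n+1)) = q ^ (2*n) * q ^ 2 := by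
      rw [show 2*(n+1) = 2*n+2 by ring, pow_add]
    have h2 : q ^ (2*(i+1)) = q ^ (2*i) * q ^ 2 := by
      rw [show 2*(i+1) = 2*i+2 by ring, pow_add]
    rw [h1, h2, mul_inv]
    field_simp
  simp only [he]
  rw [mul_comm]
  norm_num

lemma shA2 (n k : ℕ) :
    pA2 q n k * (1 - q ^ (2*n+2) * q ^ (2*k)) = pA2 q (n+1) k * (1 - q ^ (2*n+2)) := by
  unfold pA2
  rw [← prod_range_succ (fun i => 1 - q ^ (2*n+2) * q ^ (2*i)) k,
      prod_range_succ' (fun i => 1 - q ^ (2*n+2) * q ^ (2*i)) k]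
  have he : ∀ i : ℕ, q ^ (2*n+2) * q ^ (2*(i+1)) = q ^ (2*(n+1)+2) * q ^ (2*i) := by
    intro i
    rw [← pow_add, ← pow_add]
    congr 1
    ring
  simp only [he]
  norm_num

set_option maxHeartbeats 1000000 in
lemma key0 (q U V : ℂ)
    (hq : q ≠ 0) (hV : V ≠ 0)
    (h2 : 1 - q^2*V ≠ 0) (h4 : 1 - q^4*V ≠ 0)
    (h2'' : q^2*V - 1 ≠ 0) (h4'' : q^4*V - 1 ≠ 0)
    (hU3 : 1 - q^3*U ≠ 0) :
    q^5*V*(1-q*V)*U*((q^2*V-U)*(q^4*V-U)) / ((q^2*V-1)*(q^4*V-1))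
    - q*(1-q^6*V^2)*U*((q^4*V-U)*(1-q^2*V*U)) / ((q^4*V-1)*(1-q^2*V))
    + (1-q^5*V)*U*((1-q^2*V*U)*(1-q^4*V*U)) / ((1-q^2*V)*(1-q^4*V))
    = q^4*V*(1-q^6*V^2)*(q^3*U-1)*(q^4*V-U)*(1-q^2*V*U)*(1-q*U) / ((q^2*V-1)*(q^4*V-1)*(1-q^3*U)*(q^4*V))
    - q^4*V*(1-q^6*V^2)*(1-U)*(1+U)*(q*U-1) / ((q^2*V-1)*(q^4*V-1)) := by
  have hqV : q^4*V ≠ 0 := mul_ne_zero (pow_ne_zero _ hq) hV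
  field_simp
  ring

set_option maxHeartbeats 2000000 in
lemma step (hq : q ≠ 0) (hq1 : ∀ m : ℕ, 0 < m → q ^ m ≠ 1) (n k : ℕ) :
    q^(2*n+5) * (1 - q^(2*n+1)) * tm q n k - q * (1 - q^(4*n+6)) * tm q (n+1) k
      + (1 - q^(2*n+5)) * tm q (n+2) k = Hh q n (k+1) - Hh q n k := by
  have hVne : (q:ℂ)^(2*n) ≠ 0 := pow_ne_zero _ hq
  have e2 : q^2 * q^(2*n) = q^(2*n+2) := by rw [← pow_add]; ring_nf
  have e4 : q^4 * q^(2*n) = q^(2*n+4) := by rw [← pow_add]; ring_nf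
  have eU2 : q^2 * q^(2*k) = q^(2*k+2) := by rw [← pow_add]; ring_nf
  have eU3 : q^3 * q^(2*k) = q^(2*k+3) := by rw [← pow_add]; ring_nf
  have eU1 : q * q^(2*k) = q^(2*k+1) := by rw [← pow_succ']
  have eVU2 : q^2 * q^(2*n) * q^(2*k) = q^(2*n+2*k+2) := by rw [e2, ← pow_add]; ring_nf
  have eVU4 : q^4 * q^(2*n) * q^(2*k) = q^(2*n+2*k+4) := by rw [e4, ← pow_add]; ring_nf
  have h2V1 : q^2*q^(2*n) - 1 ≠ 0 := by rw [e2]; exact nzs' hq1 _ (by omega)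
  have h4V1 : q^4*q^(2*n) - 1 ≠ 0 := by rw [e4]; exact nzs' hq1 _ (by omega)
  have h2V : (1:ℂ) - q^2*q^(2*n) ≠ 0 := by rw [e2]; exact nzs hq1 _ (by omega)
  have h4V : (1:ℂ) - q^4*q^(2*n) ≠ 0 := by rw [e4]; exact nzs hq1 _ (by omega)
  have hU3 : (1:ℂ) - q^3*q^(2*k) ≠ 0 := by rw [eU3]; exact nzs hq1 _ (by omega)
  have hU2m : (1:ℂ) - q^2*q^(2*k) ≠ 0 := by rw [eU2]; exact nzs hq1 _ (by omega)
  have hU2p : (1:ℂ) + q^2*q^(2*k) ≠ 0 := by rw [eU2]; exact nzp hq1 _ (by omega)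
  have hU1 : (1:ℂ) - q*q^(2*k) ≠ 0 := by rw [eU1]; exact nzs hq1 _ (by omega)
  have hB1 : pB1 q k ≠ 0 := pB1_ne hq1 k
  have hB2 : pB2 q k ≠ 0 := pB2_ne hq1 k
  have hB3 : pB3 q k ≠ 0 := pB3_ne hq1 k
  have hh2 : q^(2*n+2) - 1 ≠ 0 := nzs' hq1 _ (by omega)
  have hh4 : q^(2*n+4) - 1 ≠ 0 := nzs' hq1 _ (by omega)
  -- shifted-product relations (multiplicative form)
  have hp1 : q^(2*(n+1)) = q^2*q^(2*n) := by rw [e2]; ring_nf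
  have hp2 : q^(2*(n+2)) = q^4*q^(2*n) := by rw [e4]; ring_nf
  have SH1 : pA1 q (n+1) k * (q^2*q^(2*n) - q^(2*k)) = (q^2*q^(2*n) - 1) * pA1 q n k := by
    have h := shA1 hq n k
    have hinv : (q ^ (2*(n+1)))⁻¹ * q ^ (2*(n+1)) = 1 := inv_mul_cancel₀ (pow_ne_zero _ hq)
    rw [hp1] at h hinv
    linear_combination (q^2*q^(2*n)) * h + (pA1 q (n+1) k * q^(2*k) - pA1 q n k) * hinv
  have SH2 : pA1 q (n+2) k * (q^4*q^(2*n) - q^(2*k)) = (q^4*q^(2*n) - 1) * pA1 q (n+1) k := by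
    have h := shA1 hq (n+1) k
    have hinv : (q ^ (2*(n+1+1)))⁻¹ * q ^ (2*(n+1+1)) = 1 := inv_mul_cancel₀ (pow_ne_zero _ hq)
    have hp2' : q^(2*(n+1+1)) = q^4*q^(2*n) := by rw [e4]; ring_nf
    rw [hp2'] at h hinv
    linear_combination (q^4*q^(2*n)) * h + (pA1 q (n+1+1) k * q^(2*k) - pA1 q (n+1) k) * hinv
  have SA2a : pA2 q n k * (1 - q^2*q^(2*n)*q^(2*k)) = pA2 q (n+1) k * (1 - q^2*q^(2*n)) := by
    have h := shA2 (q := q) n k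
    rw [show q ^ (2*n+2) = q^2*q^(2*n) from by rw [e2]] at h
    exact h
  have SA2b : pA2 q (n+1) k * (1 - q^4*q^(2*n)*q^(2*k)) = pA2 q (n+2) k * (1 - q^4*q^(2*n)) := by
    have h := shA2 (q := q) (n+1) k
    rw [show q ^ (2*(n+1)+2) = q^4*q^(2*n) from by rw [e4]; ring_nf] at h
    exact h
  -- division forms
  have eA1n : pA1 q n k = pA1 q (n+2) k * ((q^2*q^(2*n)-q^(2*k)) * (q^4*q^(2*n)-q^(2*k)))
      / ((q^2*q^(2*n)-1) * (q^4*q^(2*n)-1)) := by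
    rw [eq_div_iff (mul_ne_zero h2V1 h4V1)]
    linear_combination (-(q^4*q^(2*n)-1)) * SH1 - (q^2*q^(2*n)-q^(2*k)) * SH2
  have eA1n1 : pA1 q (n+1) k = pA1 q (n+2) k * (q^4*q^(2*n)-q^(2*k)) / (q^4*q^(2*n)-1) := by
    rw [eq_div_iff h4V1]
    linear_combination -SH2
  have eA2n1 : pA2 q (n+1) k = pA2 q n k * (1-q^2*q^(2*n)*q^(2*k)) / (1-q^2*q^(2*n)) := by
    rw [eq_div_iff h2V]
    linear_combination -SA2a
  have eA2n2 : pA2 q (n+2) k = pA2 q n k * ((1-q^2*q^(2*n)*q^(2*k)) * (1-q^4*q^(2*n)*q^(2*k)))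
      / ((1-q^2*q^(2*n)) * (1-q^4*q^(2*n))) := by
    rw [eq_div_iff (mul_ne_zero h2V h4V)]
    linear_combination (-(1-q^4*q^(2*n)*q^(2*k))) * SA2a - (1-q^2*q^(2*n)) * SA2b
  -- k-direction relations
  have RA1 : pA1 q (n+2) (k+1) = pA1 q (n+2) k * (q^4*q^(2*n)-q^(2*k)) / (q^4*q^(2*n)) := by
    rw [eq_div_iff (by rw [e4]; exact pow_ne_zero _ hq)]
    unfold pA1
    rw [prod_range_succ]
    simp only [hp2]
    have hc : (1 - (q^4*q^(2*n))⁻¹ * q^(2*k)) * (q^4*q^(2*n)) = q^4*q^(2*n) - q^(2*k) := by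
      field_simp
    linear_combination (∏ i ∈ range k, (1 - (q^4*q^(2*n))⁻¹ * q ^ (2*i))) * hc
  have RA2 : pA2 q n (k+1) = pA2 q n k * (1 - q^2*q^(2*n)*q^(2*k)) := by
    unfold pA2
    rw [prod_range_succ, ← e2]
  have RA3 : pA3 q (k+1) = pA3 q k * (1 - q*q^(2*k)) := by
    unfold pA3; rw [prod_range_succ]
  have RB1 : pB1 q (k+1) = pB1 q k * (1 - q^2*q^(2*k)) := by
    unfold pB1; rw [prod_range_succ]
  have RB2 : pB2 q (k+1) = pB2 q k * (1 + q^2*q^(2*k)) := by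
    unfold pB2; rw [prod_range_succ]
  have RB3 : pB3 q (k+1) = pB3 q k * (1 - q^3*q^(2*k)) := by
    unfold pB3; rw [prod_range_succ]
  have hkk : q^(2*(k+1)) = q^2*q^(2*k) := by rw [eU2]; ring_nf
  -- conversion of the five master quantities
  have eT0 : tm q n k = pA1 q (n+2) k * pA2 q n k * pA3 q k / (pB1 q k * pB2 q k * pB3 q k) *
      (q^(2*k)*((q^2*q^(2*n)-q^(2*k)) * (q^4*q^(2*n)-q^(2*k))) / ((q^2*q^(2*n)-1) * (q^4*q^(2*n)-1))) := by
    rw [tm, eA1n]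
    field_simp
  have eT1 : tm q (n+1) k = pA1 q (n+2) k * pA2 q n k * pA3 q k / (pB1 q k * pB2 q k * pB3 q k) *
      (q^(2*k)*((q^4*q^(2*n)-q^(2*k)) * (1-q^2*q^(2*n)*q^(2*k))) / ((q^4*q^(2*n)-1) * (1-q^2*q^(2*n)))) := by
    rw [tm, eA1n1, eA2n1]
    field_simp
  have eT2 : tm q (n+2) k = pA1 q (n+2) k * pA2 q n k * pA3 q k / (pB1 q k * pB2 q k * pB3 q k) *
      (q^(2*k)*((1-q^2*q^(2*n)*q^(2*k)) * (1-q^4*q^(2*n)*q^(2*k))) / ((1-q^2*q^(2*n)) * (1-q^4*q^(2*n)))) := by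
    rw [tm, eA2n2]
    field_simp
  have eH0 : Hh q n k = pA1 q (n+2) k * pA2 q n k * pA3 q k / (pB1 q k * pB2 q k * pB3 q k) *
      (q^4*q^(2*n)*(1-q^6*(q^(2*n))^2)*(1-q^(2*k))*(1+q^(2*k))*(q*q^(2*k)-1)
        / ((q^2*q^(2*n)-1)*(q^4*q^(2*n)-1))) := by
    rw [Hh]
    rw [show q^(2*n+4) = q^4*q^(2*n) from e4.symm,
        show q^(4*n+6) = q^6*(q^(2*n))^2 from by rw [← pow_mul, ← pow_add]; ring_nf,
        show q^(2*n+2) = q^2*q^(2*n) from e2.symm]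
    field_simp
  have eH1 : Hh q n (k+1) = pA1 q (n+2) k * pA2 q n k * pA3 q k / (pB1 q k * pB2 q k * pB3 q k) *
      (q^4*q^(2*n)*(1-q^6*(q^(2*n))^2)*(q^3*q^(2*k)-1)*(q^4*q^(2*n)-q^(2*k))*(1-q^2*q^(2*n)*q^(2*k))*(1-q*q^(2*k))
        / ((q^2*q^(2*n)-1)*(q^4*q^(2*n)-1)*(1-q^3*q^(2*k))*(q^4*q^(2*n)))) := by
    rw [Hh, RA1, RA2, RA3, RB1, RB2, RB3, hkk]
    rw [show q^(2*n+4) = q^4*q^(2*n) from e4.symm,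
        show q^(4*n+6) = q^6*(q^(2*n))^2 from by rw [← pow_mul, ← pow_add]; ring_nf,
        show q^(2*n+2) = q^2*q^(2*n) from e2.symm]
    have hq4V : q^4*q^(2*n) ≠ 0 := mul_ne_zero (pow_ne_zero _ hq) hVne
    field_simp
  rw [eT0, eT1, eT2, eH0, eH1]
  linear_combination (pA1 q (n+2) k * pA2 q n k * pA3 q k / (pB1 q k * pB2 q k * pB3 q k)) *
    key0 q (q^(2*k)) (q^(2*n)) hq hVne h2V h4V h2V1 h4V1 hU3

lemma Hh_zero (n : ℕ) : Hh q n 0 = 0 := by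
  simp [Hh]

lemma Hh_top (hq : q ≠ 0) (n : ℕ) : Hh q n (n+3) = 0 := by
  have h : pA1 q (n+2) (n+3) = 0 := by
    unfold pA1
    apply prod_eq_zero (mem_range.mpr (by omega : n+2 < n+3))
    rw [inv_mul_cancel₀ (pow_ne_zero _ hq)]
    ring
  rw [Hh, h]
  simp

lemma tm_zero (hq : q ≠ 0) {n k : ℕ} (h : n < k) : tm q n k = 0 := by
  have hz : pA1 q n k = 0 := by
    unfold pA1
    apply prod_eq_zero (mem_range.mpr h)
    rw [inv_mul_cancel₀ (pow_ne_zero _ hq)]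
    ring
  rw [tm, hz]
  simp

noncomputable def S (q : ℂ) (n : ℕ) : ℂ := ∑ k ∈ range (n+1), tm q n k

noncomputable def th (q : ℂ) (n : ℕ) : ℂ := ∑ j ∈ Icc (-(n:ℤ)) (n:ℤ), q^(j.natAbs^2)

lemma rec3 (hq : q ≠ 0) (hq1 : ∀ m : ℕ, 0 < m → q ^ m ≠ 1) (n : ℕ) :
    q^(2*n+5) * (1 - q^(2*n+1)) * S q n - q * (1 - q^(4*n+6)) * S q (n+1)
      + (1 - q^(2*n+5)) * S q (n+2) = 0 := by
  have t1 : ∑ k ∈ range (n+3), (q^(2*n+5) * (1 - q^(2*n+1)) * tm q n k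
      - q * (1 - q^(4*n+6)) * tm q (n+1) k + (1 - q^(2*n+5)) * tm q (n+2) k) = 0 := by
    rw [sum_congr rfl (fun k _ => step hq hq1 n k), sum_range_sub (Hh q n) (n+3),
      Hh_top hq, Hh_zero, sub_zero]
  have s0 : ∑ k ∈ range (n+3), tm q n k = S q n := by
    rw [S]; symm; apply sum_subset
    · intro x hx; simp only [mem_range] at hx ⊢; omega
    · intro x hx hnx
      simp only [mem_range] at hx hnx
      exact tm_zero hq (by omega)
  have s1 : ∑ k ∈ range (n+3), tm q (n+1) k = S q (n+1) := by
    rw [S]; symm; apply sum_subset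
    · intro x hx; simp only [mem_range] at hx ⊢; omega
    · intro x hx hnx
      simp only [mem_range] at hx hnx
      exact tm_zero hq (by omega)
  have s2 : ∑ k ∈ range (n+3), tm q (n+2) k = S q (n+2) := rfl
  rw [← s0, ← s1, ← s2, mul_sum, mul_sum, mul_sum, ← sum_sub_distrib, ← sum_add_distrib]
  exact t1

lemma th_succ (n : ℕ) : th q (n+1) = th q n + 2*q^((n+1)^2) := by
  unfold th
  have hset : Icc (-((n+1:ℕ):ℤ)) ((n+1:ℕ):ℤ)
      = insert (-((n+1:ℕ):ℤ)) (insert ((n+1:ℕ):ℤ) (Icc (-(n:ℤ)) (n:ℤ))) := by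
    ext x
    simp only [mem_Icc, mem_insert]
    push_cast
    omega
  rw [hset, sum_insert, sum_insert]
  · have h1 : ((-((n+1:ℕ):ℤ)).natAbs) = n+1 := by push_cast; omega
    have h2 : ((((n+1:ℕ):ℤ)).natAbs) = n+1 := by push_cast; omega
    rw [h1, h2]
    ring
  · simp only [mem_Icc]
    push_cast
    omega
  · simp only [mem_insert, mem_Icc]
    push_cast
    omega

lemma th_zero : th q 0 = 1 := by
  unfold th
  norm_num

lemma base0 (hq1 : ∀ m : ℕ, 0 < m → q ^ m ≠ 1) :
    S q 0 = (1-q)*q^0/(1-q^(2*0+1)) * th q 0 := by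
  have h1 : (1:ℂ) - q^1 ≠ 0 := nzs hq1 1 one_pos
  rw [S, th_zero]
  simp [tm, pA1, pA2, pA3, pB1, pB2, pB3]
  exact (div_self (by simpa using h1)).symm

lemma base1 (hq : q ≠ 0) (hq1 : ∀ m : ℕ, 0 < m → q ^ m ≠ 1) :
    S q 1 = (1-q)*q^1/(1-q^(2*1+1)) * th q 1 := by
  have h1 : (1:ℂ) - q^1 ≠ 0 := nzs hq1 1 one_pos
  have h2 : (1:ℂ) - q^2 ≠ 0 := nzs hq1 2 (by omega)
  have h2' : (1:ℂ) + q^2 ≠ 0 := nzp hq1 2 (by omega)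
  have h3 : (1:ℂ) - q^3 ≠ 0 := nzs hq1 3 (by omega)
  have hth : th q 1 = 1 + 2*q^1 := by
    have := th_succ (q := q) 0
    rw [th_zero] at this
    norm_num at this ⊢
    rw [this]
  rw [S, hth]
  rw [show (1:ℕ)+1 = 2 from rfl, sum_range_succ, sum_range_one]
  simp only [tm, pA1, pA2, pA3, pB1, pB2, pB3, prod_range_zero, prod_range_one]
  norm_num
  field_simp
  ring

lemma main (hq : q ≠ 0) (hq1 : ∀ m : ℕ, 0 < m → q ^ m ≠ 1) (n : ℕ) :
    S q n = (1-q)*q^n/(1-q^(2*n+1)) * th q n := by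
  induction n using Nat.twoStepInduction with
  | zero => exact base0 hq1
  | one => exact base1 hq hq1
  | more n ih0 ih1 =>
    have hr := rec3 hq hq1 n
    rw [ih0, ih1] at hr
    have hγ : (1:ℂ) - q^(2*n+5) ≠ 0 := nzs hq1 _ (by omega)
    have hγ' : (1:ℂ) - q^(2*(n+2)+1) ≠ 0 := nzs hq1 _ (by omega)
    have hb1 : (1:ℂ) - q^(2*n+1) ≠ 0 := nzs hq1 _ (by omega)
    have hb3 : (1:ℂ) - q^(2*(n+1)+1) ≠ 0 := nzs hq1 _ (by omega)
    have hθ2 : th q (n+2) = th q (n+1) + 2*q^((n+2)^2) := th_succ (n+1)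
    have hθ1 : th q (n+1) = th q n + 2*q^((n+1)^2) := th_succ n
    have hs2 : S q (n+2) = (q * (1 - q^(4*n+6)) * ((1-q)*q^(n+1)/(1-q^(2*(n+1)+1)) * th q (n+1))
        - q^(2*n+5) * (1 - q^(2*n+1)) * ((1-q)*q^n/(1-q^(2*n+1)) * th q n)) / (1 - q^(2*n+5)) := by
      rw [eq_div_iff hγ]
      linear_combination hr
    rw [hs2, hθ2, hθ1]
    field_simp
    ring

end Stmt8Aux

open Stmt8Aux in
/-- Terminating `₃φ₂(q^{-2n}, q^{2n+2}, q; -q², q³; q², q²)` equals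
`(1-q) qⁿ / (1-q^{2n+1}) ∑_{j=-n}^n q^{j²}`. -/
theorem stmt8 (q : ℂ) (n : ℕ) (hq : q ≠ 0)
    (hq1 : ∀ m : ℕ, 0 < m → q ^ m ≠ 1) :
    ∑ k ∈ Finset.range (n + 1),
      ((∏ i ∈ Finset.range k, (1 - q ^ (-(2 * n : ℤ)) * q ^ (2 * i))) *
       (∏ i ∈ Finset.range k, (1 - q ^ (2 * n + 2) * q ^ (2 * i))) *
       (∏ i ∈ Finset.range k, (1 - q * q ^ (2 * i)))) /
      ((∏ i ∈ Finset.range k, (1 - q ^ 2 * q ^ (2 * i))) *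
       (∏ i ∈ Finset.range k, (1 + q ^ 2 * q ^ (2 * i))) *
       (∏ i ∈ Finset.range k, (1 - q ^ 3 * q ^ (2 * i)))) * q ^ (2 * k) =
    (1 - q) * q ^ n / (1 - q ^ (2 * n + 1)) *
      ∑ j ∈ Finset.Icc (-(n : ℤ)) (n : ℤ), q ^ (j.natAbs ^ 2) := by
  have hzz : q ^ (-(2 * n : ℤ)) = (q ^ (2*n) : ℂ)⁻¹ := by
    rw [zpow_neg]
    norm_cast
  have hL : ∑ k ∈ Finset.range (n + 1),
      ((∏ i ∈ Finset.range k, (1 - q ^ (-(2 * n : ℤ)) * q ^ (2 * i))) *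
       (∏ i ∈ Finset.range k, (1 - q ^ (2 * n + 2) * q ^ (2 * i))) *
       (∏ i ∈ Finset.range k, (1 - q * q ^ (2 * i)))) /
      ((∏ i ∈ Finset.range k, (1 - q ^ 2 * q ^ (2 * i))) *
       (∏ i ∈ Finset.range k, (1 + q ^ 2 * q ^ (2 * i))) *
       (∏ i ∈ Finset.range k, (1 - q ^ 3 * q ^ (2 * i)))) * q ^ (2 * k) = S q n := by
    apply sum_congr rfl
    intro k _
    rw [tm]
    unfold pA1 pA2 pA3 pB1 pB2 pB3
    simp only [hzz]
  rw [hL, main hq hq1 n]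
  rfl
end

section
/- For |q|<1, $\sum_{n=0}^{\infty} \frac{(-1)^n q^{n(n+1)/2}}{(-q;q)_n} = \sum_{n=0}^{\infty} \sum_{j=-n}^{n+1} (-1)^{n+j} (1+q^{n+1}) q^{n(n+1)/2 + j^2}$. -/
open Finset Filter Topology

namespace Stmt13Aux

/-! ### Natural number exponent arithmetic -/

lemma ntri (n : ℕ) : (n + 1) * (n + 2) / 2 = n * (n + 1) / 2 + (n + 1) := by
  have h1 : (n + 1) * (n + 2) = n * (n + 1) + 2 * (n + 1) := by ring
  have h2 : Even (n * (n + 1)) := Nat.even_mul_succ_self n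
  rw [Nat.even_iff] at h2
  omega

lemma nhalf1 (n a : ℕ) :
    (n + 1) * (n + 2) / 2 + a * (n + 1) = (n * (n + 1) / 2 + (a + 1) * n) + (a + 1) := by
  have h1 : (n + 1) * (n + 2) = n * (n + 1) + 2 * (n + 1) := by ring
  have h2 : Even (n * (n + 1)) := Nat.even_mul_succ_self n
  rw [Nat.even_iff] at h2
  have h3 : a * (n + 1) = a * n + a := by ring
  have h4 : (a + 1) * n = a * n + n := by ring
  omega

lemma npent_even (b : ℕ) : b * (3 * b + 1) % 2 = 0 := by
  have h1 : b * (3 * b + 1) = b * (b + 1) + 2 * (b * b) := by ring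
  have h2 : Even (b * (b + 1)) := Nat.even_mul_succ_self b
  rw [Nat.even_iff] at h2
  omega

lemma npent1 (b : ℕ) : b * (3 * b + 1) / 2 + (2 * b + 1) = (b + 1) * (3 * b + 2) / 2 := by
  have h1 : (b + 1) * (3 * b + 2) = b * (3 * b + 1) + 2 * (2 * b + 1) := by ring
  have h2 := npent_even b
  omega

lemma npent2 (b : ℕ) : b * (3 * b + 1) / 2 + (3 * b + 2) = (b + 1) * (3 * (b + 1) + 1) / 2 := by
  have h1 : (b + 1) * (3 * (b + 1) + 1) = b * (3 * b + 1) + 2 * (3 * b + 2) := by ring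
  have h2 := npent_even b
  omega

lemma npent3 (N : ℕ) : (N + 1) * (3 * (N + 1) + 1) / 2 = (N + 1) * (N + 2) / 2 + (N + 1) ^ 2 := by
  have h1 : (N + 1) * (3 * (N + 1) + 1) = (N + 1) * (N + 2) + 2 * (N + 1) ^ 2 := by ring
  have h2 : Even ((N + 1) * (N + 2)) := Nat.even_mul_succ_self (N + 1)
  rw [Nat.even_iff] at h2
  omega

lemma npent4 (N : ℕ) : (N + 2) * (3 * (N + 1) + 2) / 2 = (N + 1) * (N + 2) / 2 + (N + 2) ^ 2 := by
  have h1 : (N + 2) * (3 * (N + 1) + 2) = (N + 1) * (N + 2) + 2 * (N + 2) ^ 2 := by ring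
  have h2 : Even ((N + 1) * (N + 2)) := Nat.even_mul_succ_self (N + 1)
  rw [Nat.even_iff] at h2
  omega

lemma le_sq (n : ℕ) : n ≤ n * n := by
  cases n with
  | zero => simp
  | succ m => calc m + 1 = (m + 1) * 1 := by ring
              _ ≤ (m + 1) * (m + 1) := Nat.mul_le_mul_left _ (by omega)

lemma nself (n : ℕ) : n ≤ n * (n + 1) / 2 := by
  have h0 := le_sq n
  have h1 : n * (n + 1) = n * n + n := by ring
  have h2 : Even (n * (n + 1)) := Nat.even_mul_succ_self n
  rw [Nat.even_iff] at h2
  omega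

lemma npb1 (b : ℕ) : b ≤ b * (3 * b + 1) / 2 := by
  have h0 := le_sq b
  have h1 : b * (3 * b + 1) = 3 * (b * b) + b := by ring
  have h2 := npent_even b
  omega

lemma npb2 (b : ℕ) : b ≤ (b + 1) * (3 * b + 2) / 2 := by
  have h0 := le_sq b
  have h1 : (b + 1) * (3 * b + 2) = 3 * (b * b) + 5 * b + 2 := by ring
  have h2 : (b + 1) * (3 * b + 2) = b * (3 * b + 1) + 2 * (2 * b + 1) := by ring
  have h3 := npent_even b
  omega

/-! ### The auxiliary family -/

noncomputable def gg (q : ℂ) (a b n : ℕ) : ℂ :=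
  (-1) ^ n * q ^ (n * (n + 1) / 2 + a * n) / ∏ i ∈ Finset.range n, (1 + q ^ (i + b + 1))

noncomputable def GG (q : ℂ) (a b : ℕ) : ℂ := ∑' n, gg q a b n

noncomputable def pp (q : ℂ) (b : ℕ) : ℂ :=
  q ^ (b * (3 * b + 1) / 2) - q ^ ((b + 1) * (3 * b + 2) / 2)

noncomputable def uu (r : ℝ) (n : ℕ) : ℝ := r ^ (n * (n + 1) / 2) / (1 - r) ^ n

section Basic

variable {q : ℂ}

lemma hne (hq : ‖q‖ < 1) (m : ℕ) (hm : m ≠ 0) : (1 : ℂ) + q ^ m ≠ 0 := by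
  intro h
  have h1 : q ^ m = -1 := by linear_combination h
  have h2 : ‖q ^ m‖ < 1 := by
    rw [norm_pow]
    exact pow_lt_one₀ (norm_nonneg q) hq hm
  rw [h1] at h2
  simp at h2

lemma hDne (hq : ‖q‖ < 1) (b n : ℕ) : (∏ i ∈ Finset.range n, (1 + q ^ (i + b + 1))) ≠ 0 :=
  Finset.prod_ne_zero_iff.mpr fun i _ => hne hq (i + b + 1) (by omega)

lemma hnorm_ge (hq : ‖q‖ < 1) (m : ℕ) (hm : m ≠ 0) : 1 - ‖q‖ ≤ ‖(1 : ℂ) + q ^ m‖ := by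
  have h1 : ‖q ^ m‖ ≤ ‖q‖ := by
    rw [norm_pow]
    exact pow_le_of_le_one (norm_nonneg q) hq.le hm
  have h2 : (1 : ℝ) ≤ ‖(1 : ℂ) + q ^ m‖ + ‖q ^ m‖ := by
    calc (1 : ℝ) = ‖(1 : ℂ) + q ^ m - q ^ m‖ := by norm_num
    _ ≤ ‖(1 : ℂ) + q ^ m‖ + ‖q ^ m‖ := norm_sub_le _ _
  linarith

lemma hDnorm (hq : ‖q‖ < 1) (b n : ℕ) :
    (1 - ‖q‖) ^ n ≤ ‖∏ i ∈ Finset.range n, (1 + q ^ (i + b + 1))‖ := by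
  rw [norm_prod]
  calc (1 - ‖q‖) ^ n = ∏ _i ∈ Finset.range n, (1 - ‖q‖) := by
        rw [Finset.prod_const, Finset.card_range]
  _ ≤ ∏ i ∈ Finset.range n, ‖(1 : ℂ) + q ^ (i + b + 1)‖ := by
        apply Finset.prod_le_prod
        · intro i _; linarith [norm_nonneg q]
        · intro i _; exact hnorm_ge hq (i + b + 1) (by omega)

lemma hg_le (hq : ‖q‖ < 1) (a b n : ℕ) : ‖gg q a b n‖ ≤ uu ‖q‖ n := by
  have hr0 : (0 : ℝ) ≤ ‖q‖ := norm_nonneg q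
  have h1r : (0 : ℝ) < 1 - ‖q‖ := by linarith
  unfold gg uu
  rw [norm_div, norm_mul, norm_pow, norm_pow, norm_neg, norm_one, one_pow, one_mul]
  apply div_le_div₀ (pow_nonneg hr0 _) ?_ (pow_pos h1r n) (hDnorm hq b n)
  exact pow_le_pow_of_le_one hr0 hq.le (by omega)

lemma hu_sum (hq : ‖q‖ < 1) : Summable (uu ‖q‖) := by
  have hr0 : (0 : ℝ) ≤ ‖q‖ := norm_nonneg q
  have h1r : (0 : ℝ) < 1 - ‖q‖ := by linarith
  have hunn : ∀ n, 0 ≤ uu ‖q‖ n := fun n =>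
    div_nonneg (pow_nonneg hr0 _) (pow_nonneg h1r.le _)
  apply summable_of_ratio_norm_eventually_le (r := 1 / 2) (by norm_num)
  have hev : ∀ᶠ n : ℕ in atTop, ‖q‖ ^ n < (1 - ‖q‖) / 2 :=
    (tendsto_pow_atTop_nhds_zero_of_lt_one hr0 hq).eventually_lt_const (by linarith)
  filter_upwards [hev] with n hn
  have hs : ‖q‖ ^ (n + 1) ≤ ‖q‖ ^ n := pow_le_pow_of_le_one hr0 hq.le (by omega)
  have hkey : ‖q‖ ^ (n + 1) / (1 - ‖q‖) ≤ 1 / 2 := by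
    rw [div_le_div_iff₀ h1r (by norm_num : (0:ℝ) < 2)]
    nlinarith
  have hrw : uu ‖q‖ (n + 1) = uu ‖q‖ n * (‖q‖ ^ (n + 1) / (1 - ‖q‖)) := by
    unfold uu
    rw [ntri n, pow_add, div_mul_div_comm, ← pow_succ]
  rw [Real.norm_eq_abs, Real.norm_eq_abs, abs_of_nonneg (hunn _), abs_of_nonneg (hunn _), hrw]
  calc uu ‖q‖ n * (‖q‖ ^ (n + 1) / (1 - ‖q‖)) ≤ uu ‖q‖ n * (1 / 2) :=
        mul_le_mul_of_nonneg_left hkey (hunn n)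
  _ = 1 / 2 * uu ‖q‖ n := by ring

lemma hgsum (hq : ‖q‖ < 1) (a b : ℕ) : Summable (gg q a b) :=
  Summable.of_norm_bounded (hu_sum hq) (hg_le hq a b)

lemma hGbound (hq : ‖q‖ < 1) (a b : ℕ) : ‖GG q a b‖ ≤ ∑' n, uu ‖q‖ n :=
  tsum_of_norm_bounded (hu_sum hq).hasSum (hg_le hq a b)

/-! ### The two relations -/

lemma termA (hq : ‖q‖ < 1) (a b n : ℕ) :
    (1 + q ^ (b + 1)) * gg q a b (n + 1) = -(q ^ (a + 1) * gg q (a + 1) (b + 1) n) := by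
  have h1 : ((1 : ℂ) + q ^ (b + 1)) ≠ 0 := hne hq (b + 1) (by omega)
  have h2 := hDne hq (b + 1) n
  unfold gg
  rw [Finset.prod_range_succ']
  have hprod : ∀ i : ℕ, i + 1 + b + 1 = i + (b + 1) + 1 := by omega
  simp only [hprod, Nat.zero_add]
  rw [nhalf1 n a, pow_add q (n * (n + 1) / 2 + (a + 1) * n) (a + 1)]
  set D := ∏ i ∈ Finset.range n, (1 + q ^ (i + (b + 1) + 1)) with hDdef
  rw [mul_comm D (1 + q ^ (b + 1)), ← mul_div_assoc,
    mul_div_mul_left _ _ h1, ← mul_div_assoc, ← neg_div]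
  congr 1
  ring

lemma relA (hq : ‖q‖ < 1) (a b : ℕ) :
    (1 + q ^ (b + 1)) * GG q a b = (1 + q ^ (b + 1)) - q ^ (a + 1) * GG q (a + 1) (b + 1) := by
  have h0 : GG q a b = 1 + ∑' n, gg q a b (n + 1) := by
    rw [GG, Summable.tsum_eq_zero_add (hgsum hq a b)]
    congr 1
    unfold gg
    simp
  have hshift : Summable fun n => gg q a b (n + 1) :=
    (summable_nat_add_iff 1).mpr (hgsum hq a b)
  calc (1 + q ^ (b + 1)) * GG q a b
      = (1 + q ^ (b + 1)) + ∑' n, (1 + q ^ (b + 1)) * gg q a b (n + 1) := by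
        rw [h0, mul_add, mul_one, tsum_mul_left]
  _ = (1 + q ^ (b + 1)) + ∑' n, -(q ^ (a + 1) * gg q (a + 1) (b + 1) n) := by
        rw [tsum_congr fun n => termA hq a b n]
  _ = (1 + q ^ (b + 1)) - q ^ (a + 1) * GG q (a + 1) (b + 1) := by
        rw [tsum_neg, tsum_mul_left, GG]
        ring

lemma termB (hq : ‖q‖ < 1) (a b n : ℕ) :
    gg q a (b + 1) n + q ^ (b + 1) * gg q (a + 1) (b + 1) n = (1 + q ^ (b + 1)) * gg q a b n := by
  have h1 : ((1 : ℂ) + q ^ (b + 1)) ≠ 0 := hne hq (b + 1) (by omega)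
  have h2 := hDne hq (b + 1) n
  have h3 := hDne hq b n
  have hD : (1 + q ^ (b + 1)) * ∏ i ∈ Finset.range n, (1 + q ^ (i + (b + 1) + 1)) =
      (∏ i ∈ Finset.range n, (1 + q ^ (i + b + 1))) * (1 + q ^ (n + b + 1)) := by
    have hh1 := Finset.prod_range_succ (fun i => 1 + q ^ (i + b + 1)) n
    have hh2 := Finset.prod_range_succ' (fun i => 1 + q ^ (i + b + 1)) n
    simp only [Nat.zero_add] at hh1 hh2
    have hprod : ∀ i : ℕ, i + 1 + b + 1 = i + (b + 1) + 1 := by omega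
    simp only [hprod] at hh2
    rw [hh1] at hh2
    rw [hh2]
    ring
  unfold gg
  have he : n * (n + 1) / 2 + (a + 1) * n = (n * (n + 1) / 2 + a * n) + n := by
    have : (a + 1) * n = a * n + n := by ring
    omega
  rw [he, pow_add]
  set D1 := ∏ i ∈ Finset.range n, (1 + q ^ (i + (b + 1) + 1)) with hD1def
  set D0 := ∏ i ∈ Finset.range n, (1 + q ^ (i + b + 1)) with hD0def
  rw [← mul_div_assoc, ← mul_div_assoc, ← add_div, div_eq_div_iff h2 h3]
  linear_combination (-((-1 : ℂ) ^ n * q ^ (n * (n + 1) / 2 + a * n))) * hD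

lemma relB (hq : ‖q‖ < 1) (a b : ℕ) :
    GG q a (b + 1) + q ^ (b + 1) * GG q (a + 1) (b + 1) = (1 + q ^ (b + 1)) * GG q a b := by
  rw [GG, GG, GG, ← tsum_mul_left, ← tsum_mul_left,
    ← Summable.tsum_add (hgsum hq a (b + 1)) ((hgsum hq (a + 1) (b + 1)).mul_left _)]
  exact tsum_congr fun n => termB hq a b n

lemma relP (hq : ‖q‖ < 1) (b : ℕ) :
    GG q (2 * b) b = 1 - q ^ (2 * b + 1) + q ^ (3 * b + 2) * GG q (2 * b + 2) (b + 1) := by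
  have hc : ((1 : ℂ) + q ^ (b + 1)) ≠ 0 := hne hq (b + 1) (by omega)
  have A1 := relA hq (2 * b) b
  have A2 := relA hq (2 * b + 1) b
  have B := relB hq (2 * b + 1) b
  apply mul_left_cancel₀ hc
  have h22 : (2 : ℕ) * b + 1 + 1 = 2 * b + 2 := by omega
  rw [h22] at A2
  linear_combination A1 - q ^ (2 * b + 1) * B - q ^ (2 * b + 1) * A2

lemma iterP (hq : ‖q‖ < 1) (N : ℕ) :
    GG q 0 0 = (∑ b ∈ Finset.range N, pp q b) + q ^ (N * (3 * N + 1) / 2) * GG q (2 * N) N := by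
  induction N with
  | zero => simp
  | succ N ih =>
    rw [Finset.sum_range_succ, ih, relP hq N]
    rw [show (N + 1) * (3 * (N + 1) + 1) / 2 = N * (3 * N + 1) / 2 + (3 * N + 2) from
      (npent2 N).symm]
    rw [show 2 * (N + 1) = 2 * N + 2 from by ring]
    unfold pp
    rw [show (N + 1) * (3 * N + 2) / 2 = N * (3 * N + 1) / 2 + (2 * N + 1) from (npent1 N).symm]
    rw [pow_add, pow_add]
    ring

lemma hppsum (hq : ‖q‖ < 1) : Summable (pp q) := by
  have hr0 : (0 : ℝ) ≤ ‖q‖ := norm_nonneg q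
  have hgeo : Summable fun b : ℕ => ‖q‖ ^ b := summable_geometric_of_lt_one hr0 hq
  have s1 : Summable fun b : ℕ => q ^ (b * (3 * b + 1) / 2) := by
    apply Summable.of_norm_bounded hgeo
    intro b
    rw [norm_pow]
    exact pow_le_pow_of_le_one hr0 hq.le (npb1 b)
  have s2 : Summable fun b : ℕ => q ^ ((b + 1) * (3 * b + 2) / 2) := by
    apply Summable.of_norm_bounded hgeo
    intro b
    rw [norm_pow]
    exact pow_le_pow_of_le_one hr0 hq.le (npb2 b)
  exact s1.sub s2

lemma LHS_eq (hq : ‖q‖ < 1) : GG q 0 0 = ∑' b, pp q b := by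
  have hr0 : (0 : ℝ) ≤ ‖q‖ := norm_nonneg q
  have h1 : Tendsto (fun N => ∑ b ∈ Finset.range N, pp q b) atTop (𝓝 (∑' b, pp q b)) :=
    (hppsum hq).hasSum.tendsto_sum_nat
  have hrem : Tendsto (fun N => q ^ (N * (3 * N + 1) / 2) * GG q (2 * N) N) atTop (𝓝 0) := by
    have htnd : Tendsto (fun N : ℕ => (∑' n, uu ‖q‖ n) * ‖q‖ ^ N) atTop (𝓝 0) := by
      have := (tendsto_pow_atTop_nhds_zero_of_lt_one hr0 hq).const_mul (∑' n, uu ‖q‖ n)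
      simpa using this
    apply squeeze_zero_norm _ htnd
    · intro N
      rw [norm_mul, norm_pow]
      have hb1 : ‖q‖ ^ (N * (3 * N + 1) / 2) ≤ ‖q‖ ^ N :=
        pow_le_pow_of_le_one hr0 hq.le (npb1 N)
      have hb2 : ‖GG q (2 * N) N‖ ≤ ∑' n, uu ‖q‖ n := hGbound hq (2 * N) N
      calc ‖q‖ ^ (N * (3 * N + 1) / 2) * ‖GG q (2 * N) N‖
          ≤ ‖q‖ ^ N * (∑' n, uu ‖q‖ n) := by
            apply mul_le_mul hb1 hb2 (norm_nonneg _) (pow_nonneg hr0 N)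
      _ = (∑' n, uu ‖q‖ n) * ‖q‖ ^ N := by ring
  have h2 : Tendsto (fun N => ∑ b ∈ Finset.range N, pp q b) atTop (𝓝 (GG q 0 0)) := by
    have hfun : (fun N => ∑ b ∈ Finset.range N, pp q b) =
        fun N => GG q 0 0 - q ^ (N * (3 * N + 1) / 2) * GG q (2 * N) N := by
      funext N
      have := iterP hq N
      linear_combination -this
    rw [hfun]
    simpa using tendsto_const_nhds.sub hrem
  exact tendsto_nhds_unique h2 h1

/-! ### The right-hand side -/

noncomputable def BB (q : ℂ) (n : ℕ) : ℂ :=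
  ∑ j ∈ Finset.Icc (-(n : ℤ)) ((n : ℤ) + 1),
    (-1 : ℂ) ^ (n + j.natAbs) * (1 + q ^ (n + 1)) * q ^ (n * (n + 1) / 2 + j.natAbs ^ 2)

noncomputable def cc (q : ℂ) (N : ℕ) : ℂ :=
  ∑ j ∈ Finset.Icc (-(N : ℤ)) ((N : ℤ) + 1), (-1 : ℂ) ^ j.natAbs * q ^ (j.natAbs ^ 2)

lemma BBeq (n : ℕ) :
    BB q n = (-1) ^ n * (q ^ (n * (n + 1) / 2) + q ^ ((n + 1) * (n + 2) / 2)) * cc q n := by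
  unfold BB cc
  rw [Finset.mul_sum]
  apply Finset.sum_congr rfl
  intro j _
  rw [pow_add (-1 : ℂ) n j.natAbs, pow_add q, ntri n, pow_add]
  ring

lemma ccrec (N : ℕ) :
    cc q (N + 1) = cc q N + (-1) ^ (N + 1) * (q ^ ((N + 1) ^ 2) - q ^ ((N + 2) ^ 2)) := by
  unfold cc
  have hset : Finset.Icc (-((N + 1 : ℕ) : ℤ)) (((N + 1 : ℕ) : ℤ) + 1) =
      insert (-((N + 1 : ℕ) : ℤ)) (insert (((N : ℕ) : ℤ) + 2)
        (Finset.Icc (-(N : ℤ)) ((N : ℤ) + 1))) := by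
    ext j
    simp only [Finset.mem_Icc, Finset.mem_insert]
    push_cast
    omega
  rw [hset, Finset.sum_insert (by
      simp only [Finset.mem_insert, Finset.mem_Icc]
      push_cast
      omega),
    Finset.sum_insert (by
      simp only [Finset.mem_Icc]
      push_cast
      omega)]
  have h1 : (-((N + 1 : ℕ) : ℤ)).natAbs = N + 1 := by
    rw [Int.natAbs_neg, Int.natAbs_natCast]
  have h2 : (((N : ℕ) : ℤ) + 2).natAbs = N + 2 := by
    have : ((N : ℕ) : ℤ) + 2 = ((N + 2 : ℕ) : ℤ) := by push_cast; ring
    rw [this, Int.natAbs_natCast]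
  rw [h1, h2]
  ring

lemma cc0 : cc q 0 = 1 - q := by
  unfold cc
  have hset : Finset.Icc (-((0 : ℕ) : ℤ)) (((0 : ℕ) : ℤ) + 1) = {0, 1} := by
    ext j
    simp only [Finset.mem_Icc, Finset.mem_insert, Finset.mem_singleton]
    push_cast
    omega
  rw [hset, Finset.sum_insert (by simp), Finset.sum_singleton]
  simp
  ring

lemma Bpart (N : ℕ) :
    ∑ n ∈ Finset.range (N + 1), BB q n =
      (∑ b ∈ Finset.range (N + 1), pp q b) + (-1) ^ N * q ^ ((N + 1) * (N + 2) / 2) * cc q N := by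
  induction N with
  | zero =>
    rw [Finset.sum_range_one, Finset.sum_range_one, BBeq, cc0]
    unfold pp
    norm_num
    ring
  | succ N ih =>
    rw [Finset.sum_range_succ, ih, Finset.sum_range_succ (f := pp q) (n := N + 1), BBeq, ccrec]
    unfold pp
    have hev : Even ((N + 1) * (N + 2)) := Nat.even_mul_succ_self (N + 1)
    rw [Nat.even_iff] at hev
    rw [show (N + 1) * (N + 1 + 1) / 2 = (N + 1) * (N + 2) / 2 from by
      have h1 : (N + 1) * (N + 1 + 1) = (N + 1) * (N + 2) := by ring
      omega]
    rw [show (N + 1) * (3 * (N + 1) + 1) / 2 = (N + 1) * (N + 2) / 2 + (N + 1) ^ 2 from by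
      have h1 : (N + 1) * (3 * (N + 1) + 1) = (N + 1) * (N + 2) + 2 * (N + 1) ^ 2 := by ring
      omega]
    rw [show (N + 1 + 1) * (3 * (N + 1) + 2) / 2 = (N + 1) * (N + 2) / 2 + (N + 2) ^ 2 from by
      have h1 : (N + 1 + 1) * (3 * (N + 1) + 2) = (N + 1) * (N + 2) + 2 * (N + 2) ^ 2 := by ring
      omega]
    rw [show (N + 1 + 1) * (N + 1 + 2) / 2 = (N + 1) * (N + 2) / 2 + (N + 2) from by
      have h1 : (N + 1 + 1) * (N + 1 + 2) = (N + 1) * (N + 2) + 2 * (N + 2) := by ring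
      omega]
    rw [pow_add q ((N + 1) * (N + 2) / 2) ((N + 1) ^ 2),
      pow_add q ((N + 1) * (N + 2) / 2) ((N + 2) ^ 2),
      pow_add q ((N + 1) * (N + 2) / 2) (N + 2)]
    have h7 : ((-1 : ℂ) ^ N) ^ 2 = 1 := by
      rw [← pow_mul, mul_comm, pow_mul]
      norm_num
    linear_combination (q ^ ((N + 1) * (N + 2) / 2) * (q ^ ((N + 1) ^ 2) - q ^ ((N + 2) ^ 2))) * h7

lemma ccbound (hq : ‖q‖ < 1) (N : ℕ) : ‖cc q N‖ ≤ 2 * (1 - ‖q‖)⁻¹ := by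
  have hr0 : (0 : ℝ) ≤ ‖q‖ := norm_nonneg q
  have h1r : (0 : ℝ) < 1 - ‖q‖ := by linarith
  have aux : ∀ N, ‖cc q N‖ ≤ (2 - ‖q‖ ^ (N + 1) - ‖q‖ ^ (N + 2)) / (1 - ‖q‖) := by
    intro N
    induction N with
    | zero =>
      rw [cc0]
      have hb : ‖(1 : ℂ) - q‖ ≤ 1 + ‖q‖ := by
        calc ‖(1 : ℂ) - q‖ ≤ ‖(1 : ℂ)‖ + ‖q‖ := norm_sub_le _ _
        _ = 1 + ‖q‖ := by simp
      have h2 : (1 + ‖q‖) * (1 - ‖q‖) ≤ 2 - ‖q‖ ^ 1 - ‖q‖ ^ 2 := by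
        have : (1 + ‖q‖) * (1 - ‖q‖) = 1 - ‖q‖ ^ 2 := by ring
        rw [this]
        simp only [pow_one]
        linarith
      calc ‖(1 : ℂ) - q‖ ≤ 1 + ‖q‖ := hb
      _ ≤ (2 - ‖q‖ ^ (0 + 1) - ‖q‖ ^ (0 + 2)) / (1 - ‖q‖) := by
          rw [le_div_iff₀ h1r]
          simpa using h2
    | succ N ih =>
      have hs1 : ‖q‖ ^ ((N + 1) ^ 2) ≤ ‖q‖ ^ (N + 1) :=
        pow_le_pow_of_le_one hr0 hq.le (Nat.le_self_pow (by norm_num) _)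
      have hs2 : ‖q‖ ^ ((N + 2) ^ 2) ≤ ‖q‖ ^ (N + 2) :=
        pow_le_pow_of_le_one hr0 hq.le (Nat.le_self_pow (by norm_num) _)
      have hstep : ‖cc q (N + 1)‖ ≤ ‖cc q N‖ + (‖q‖ ^ (N + 1) + ‖q‖ ^ (N + 2)) := by
        rw [ccrec]
        calc ‖cc q N + (-1) ^ (N + 1) * (q ^ ((N + 1) ^ 2) - q ^ ((N + 2) ^ 2))‖
            ≤ ‖cc q N‖ + ‖(-1 : ℂ) ^ (N + 1) * (q ^ ((N + 1) ^ 2) - q ^ ((N + 2) ^ 2))‖ :=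
              norm_add_le _ _
        _ ≤ ‖cc q N‖ + (‖q‖ ^ (N + 1) + ‖q‖ ^ (N + 2)) := by
              rw [norm_mul, norm_pow, norm_neg, norm_one, one_pow, one_mul]
              have h4 := norm_sub_le (q ^ ((N + 1) ^ 2)) (q ^ ((N + 2) ^ 2))
              rw [norm_pow, norm_pow] at h4
              linarith
      have heq : (2 - ‖q‖ ^ (N + 1) - ‖q‖ ^ (N + 2)) / (1 - ‖q‖) + (‖q‖ ^ (N + 1) + ‖q‖ ^ (N + 2))
          = (2 - ‖q‖ ^ (N + 1 + 1) - ‖q‖ ^ (N + 1 + 2)) / (1 - ‖q‖) := by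
        rw [div_add' _ _ _ h1r.ne', div_eq_div_iff h1r.ne' h1r.ne']
        ring
      calc ‖cc q (N + 1)‖ ≤ ‖cc q N‖ + (‖q‖ ^ (N + 1) + ‖q‖ ^ (N + 2)) := hstep
      _ ≤ (2 - ‖q‖ ^ (N + 1) - ‖q‖ ^ (N + 2)) / (1 - ‖q‖) + (‖q‖ ^ (N + 1) + ‖q‖ ^ (N + 2)) := by
          linarith
      _ = (2 - ‖q‖ ^ (N + 1 + 1) - ‖q‖ ^ (N + 1 + 2)) / (1 - ‖q‖) := heq
  calc ‖cc q N‖ ≤ (2 - ‖q‖ ^ (N + 1) - ‖q‖ ^ (N + 2)) / (1 - ‖q‖) := aux N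
  _ ≤ 2 / (1 - ‖q‖) := by
      have hx1 : (0 : ℝ) ≤ ‖q‖ ^ (N + 1) := pow_nonneg hr0 _
      have hx2 : (0 : ℝ) ≤ ‖q‖ ^ (N + 2) := pow_nonneg hr0 _
      rw [div_le_div_iff₀ h1r h1r]
      nlinarith
  _ = 2 * (1 - ‖q‖)⁻¹ := by ring

lemma hBBsum (hq : ‖q‖ < 1) : Summable (BB q) := by
  have hr0 : (0 : ℝ) ≤ ‖q‖ := norm_nonneg q
  have h1r : (0 : ℝ) < 1 - ‖q‖ := by linarith
  apply Summable.of_norm_bounded (g := fun n => 2 * (2 * (1 - ‖q‖)⁻¹) * ‖q‖ ^ n)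
    (((summable_geometric_of_lt_one hr0 hq).mul_left _))
  intro n
  rw [BBeq]
  rw [norm_mul, norm_mul, norm_pow, norm_neg, norm_one, one_pow, one_mul]
  have hb1 : ‖q ^ (n * (n + 1) / 2) + q ^ ((n + 1) * (n + 2) / 2)‖ ≤ 2 * ‖q‖ ^ n := by
    have t1 : ‖q ^ (n * (n + 1) / 2)‖ ≤ ‖q‖ ^ n := by
      rw [norm_pow]
      exact pow_le_pow_of_le_one hr0 hq.le (nself n)
    have t2 : ‖q ^ ((n + 1) * (n + 2) / 2)‖ ≤ ‖q‖ ^ n := by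
      rw [norm_pow]
      apply pow_le_pow_of_le_one hr0 hq.le
      have h5 := nself (n + 1)
      have h6 : (n + 1) * (n + 1 + 1) = (n + 1) * (n + 2) := by ring
      omega
    calc ‖q ^ (n * (n + 1) / 2) + q ^ ((n + 1) * (n + 2) / 2)‖
        ≤ ‖q ^ (n * (n + 1) / 2)‖ + ‖q ^ ((n + 1) * (n + 2) / 2)‖ := norm_add_le _ _
    _ ≤ 2 * ‖q‖ ^ n := by linarith
  have hb2 : ‖cc q n‖ ≤ 2 * (1 - ‖q‖)⁻¹ := ccbound hq n
  calc ‖q ^ (n * (n + 1) / 2) + q ^ ((n + 1) * (n + 2) / 2)‖ * ‖cc q n‖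
      ≤ (2 * ‖q‖ ^ n) * (2 * (1 - ‖q‖)⁻¹) := by
        apply mul_le_mul hb1 hb2 (norm_nonneg _) (by positivity)
  _ = 2 * (2 * (1 - ‖q‖)⁻¹) * ‖q‖ ^ n := by ring

lemma RHS_eq (hq : ‖q‖ < 1) : (∑' n, BB q n) = ∑' b, pp q b := by
  have hr0 : (0 : ℝ) ≤ ‖q‖ := norm_nonneg q
  have h1 : Tendsto (fun N => ∑ n ∈ Finset.range N, BB q n) atTop (𝓝 (∑' n, BB q n)) :=
    (hBBsum hq).hasSum.tendsto_sum_nat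
  have h1' : Tendsto (fun N => ∑ n ∈ Finset.range (N + 1), BB q n) atTop (𝓝 (∑' n, BB q n)) :=
    h1.comp (tendsto_add_atTop_nat 1)
  have herr : Tendsto (fun N => (-1 : ℂ) ^ N * q ^ ((N + 1) * (N + 2) / 2) * cc q N)
      atTop (𝓝 0) := by
    have htnd : Tendsto (fun N : ℕ => (2 * (1 - ‖q‖)⁻¹) * ‖q‖ ^ N) atTop (𝓝 0) := by
      have := (tendsto_pow_atTop_nhds_zero_of_lt_one hr0 hq).const_mul (2 * (1 - ‖q‖)⁻¹)
      simpa using this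
    apply squeeze_zero_norm _ htnd
    · intro N
      rw [norm_mul, norm_mul, norm_pow, norm_pow, norm_neg, norm_one, one_pow, one_mul]
      have hb1 : ‖q‖ ^ ((N + 1) * (N + 2) / 2) ≤ ‖q‖ ^ N := by
        apply pow_le_pow_of_le_one hr0 hq.le
        have h5 := nself (N + 1)
        have h6 : (N + 1) * (N + 1 + 1) = (N + 1) * (N + 2) := by ring
        omega
      calc ‖q‖ ^ ((N + 1) * (N + 2) / 2) * ‖cc q N‖
          ≤ ‖q‖ ^ N * (2 * (1 - ‖q‖)⁻¹) := by
            apply mul_le_mul hb1 (ccbound hq N) (norm_nonneg _) (pow_nonneg hr0 N)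
      _ = (2 * (1 - ‖q‖)⁻¹) * ‖q‖ ^ N := by ring
  have h2 : Tendsto (fun N => ∑ n ∈ Finset.range (N + 1), BB q n) atTop (𝓝 (∑' b, pp q b)) := by
    have hfun : (fun N => ∑ n ∈ Finset.range (N + 1), BB q n) =
        fun N => (∑ b ∈ Finset.range (N + 1), pp q b) +
          (-1 : ℂ) ^ N * q ^ ((N + 1) * (N + 2) / 2) * cc q N := by
      funext N
      exact Bpart N
    rw [hfun]
    have hpt : Tendsto (fun N => ∑ b ∈ Finset.range (N + 1), pp q b) atTop (𝓝 (∑' b, pp q b)) :=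
      (hppsum hq).hasSum.tendsto_sum_nat.comp (tendsto_add_atTop_nat 1)
    simpa using hpt.add herr
  exact tendsto_nhds_unique h1' h2

end Basic

end Stmt13Aux

open Stmt13Aux in
theorem stmt13 (q : ℂ) (hq : ‖q‖ < 1) :
    ∑' n : ℕ, (-1 : ℂ) ^ n * q ^ (n * (n + 1) / 2) /
        ∏ k ∈ Finset.range n, (1 + q ^ (k + 1)) =
    ∑' n : ℕ, ∑ j ∈ Finset.Icc (-(n : ℤ)) ((n : ℤ) + 1),
      (-1 : ℂ) ^ (n + j.natAbs) * (1 + q ^ (n + 1)) * q ^ (n * (n + 1) / 2 + j.natAbs ^ 2) := by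
  have hq' : ‖q‖ < 1 := hq
  have hL : (∑' n : ℕ, (-1 : ℂ) ^ n * q ^ (n * (n + 1) / 2) /
      ∏ k ∈ Finset.range n, (1 + q ^ (k + 1))) = GG q 0 0 := by
    apply tsum_congr
    intro n
    simp [gg]
  have hR : (∑' n : ℕ, ∑ j ∈ Finset.Icc (-(n : ℤ)) ((n : ℤ) + 1),
      (-1 : ℂ) ^ (n + j.natAbs) * (1 + q ^ (n + 1)) * q ^ (n * (n + 1) / 2 + j.natAbs ^ 2)) =
      ∑' n, BB q n := rfl
  rw [hL, hR, LHS_eq hq', RHS_eq hq']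
end
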